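/- arXiv:2505.01633 — 6 statements merged into one kernel-verified Lean document; each statement's English description precedes it below -/
import Mathlib

section
/- Let ν ≥ 1 be an integer, x a nonzero real number, and M := C(2ν−1, ν). Suppose r and f are formal power series in u with real coefficients such that r + M·u·r^ν = x (the constant series x) and ν²·u²·f'' + ν(ν+1)·u·f' + 1/2 = r²/(2x²), where f', f'' denote the first and second formal derivatives of f with respect to u. Then for every j ≥ 1, the coefficient of u^j in f equals (−M)^j · (νj−1)! / ( j! · ((ν−1)j+2)! ) · x^{(ν−1)j}. -/
open PowerSeries

open Finset

namespace GenusZeroAux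

noncomputable def Rn (ν k i : ℕ) : ℝ :=
  if k = 0 ∧ i = 0 then 1
  else (k : ℝ) * (((ν * i + k).choose i : ℕ) : ℝ) / (((ν * i + k : ℕ) : ℕ) : ℝ)

lemma Rn_zero_succ (ν i : ℕ) : Rn ν 0 (i + 1) = 0 := by
  simp [Rn]

lemma Rn_k_zero (ν k : ℕ) : Rn ν k 0 = 1 := by
  rcases Nat.eq_zero_or_pos k with hk | hk
  · simp [Rn, hk]
  · have hk' : k ≠ 0 := hk.ne'
    simp [Rn, hk']

lemma Rn_one (ν i : ℕ) : Rn ν 1 i = (((ν * i + 1).choose i : ℕ) : ℝ) / ((ν * i + 1 : ℕ) : ℝ) := by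
  rcases Nat.eq_zero_or_pos i with hi | hi
  · simp [Rn, hi]
  · rw [Rn, if_neg (by omega)]
    push_cast
    ring

lemma Rn_two (ν i : ℕ) :
    Rn ν 2 i = 2 * (((ν * i + 2).choose i : ℕ) : ℝ) / ((ν * i + 2 : ℕ) : ℝ) := by
  rcases Nat.eq_zero_or_pos i with hi | hi
  · simp [Rn, hi]
  · rw [Rn, if_neg (by omega)]
    push_cast
    ring

lemma choose_key (ν k i N : ℕ) (hν : 1 ≤ ν) (hN : N = ν * i + k + ν) :
    (k + 1) * ((N + 1).choose (i + 1)) * N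
      = (k * (N.choose (i + 1)) + (k + ν) * (N.choose i)) * (N + 1) := by
  have hiν : i ≤ ν * i := Nat.le_mul_of_pos_left i hν
  have hiN : i ≤ N := by omega
  set m := N - i with hmdef
  have hNm : N = i + m := by omega
  have hscalar : (k + 1) * N = k * m + (k + ν) * (i + 1) := by
    have h1 : k * N = k * i + k * m := by rw [hNm]; ring
    calc (k + 1) * N = k * N + N := by ring
      _ = (k * i + k * m) + (ν * i + k + ν) := by rw [h1, hN]
      _ = k * m + (k + ν) * (i + 1) := by ring
  have h1 : (N + 1) * N.choose i = (N + 1).choose (i + 1) * (i + 1) :=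
    Nat.add_one_mul_choose_eq N i
  have h2 : N.choose (i + 1) * (i + 1) = N.choose i * m :=
    Nat.choose_succ_right_eq N i
  apply Nat.eq_of_mul_eq_mul_left (show 0 < i + 1 from i.succ_pos)
  calc (i + 1) * ((k + 1) * ((N + 1).choose (i + 1)) * N)
      = (k + 1) * N * ((N + 1).choose (i + 1) * (i + 1)) := by ring
    _ = (k + 1) * N * ((N + 1) * N.choose i) := by rw [← h1]
    _ = ((k * m + (k + ν) * (i + 1)) * N.choose i) * (N + 1) := by rw [hscalar]; ring
    _ = (k * (N.choose i * m) + (k + ν) * (i + 1) * N.choose i) * (N + 1) := by ring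
    _ = (k * (N.choose (i + 1) * (i + 1)) + (k + ν) * (i + 1) * N.choose i) * (N + 1) := by
        rw [h2]
    _ = (i + 1) * ((k * (N.choose (i + 1)) + (k + ν) * (N.choose i)) * (N + 1)) := by ring

lemma Rn_rec (ν : ℕ) (hν : 1 ≤ ν) (k i : ℕ) :
    Rn ν (k + 1) (i + 1) = Rn ν k (i + 1) + Rn ν (k + ν) i := by
  set N : ℕ := ν * i + (k + ν) with hNdef
  have hN1 : ν * (i + 1) + (k + 1) = N + 1 := by rw [hNdef]; ring
  have hN2 : ν * (i + 1) + k = N := by rw [hNdef]; ring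
  rw [Rn, if_neg (by omega : ¬(k + 1 = 0 ∧ i + 1 = 0)),
      Rn, if_neg (by omega : ¬(k = 0 ∧ i + 1 = 0)),
      Rn, if_neg (by omega : ¬(k + ν = 0 ∧ i = 0)),
      hN1, hN2]
  have hNpos : 0 < N := by omega
  have hA : ((N + 1 : ℕ) : ℝ) ≠ 0 := by exact_mod_cast (Nat.succ_pos N).ne'
  have hB : ((N : ℕ) : ℝ) ≠ 0 := by exact_mod_cast hNpos.ne'
  rw [← hNdef, ← add_div, div_eq_div_iff hA hB]
  have key := choose_key ν k i N hν (by omega)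
  push_cast
  exact_mod_cast congrArg (Nat.cast : ℕ → ℝ) key

end GenusZeroAux

namespace GenusZeroAux2
open GenusZeroAux

lemma Rn_conv (ν : ℕ) (hν : 1 ≤ ν) : ∀ j k m : ℕ,
    ∑ i ∈ Finset.range (j + 1), Rn ν k i * Rn ν m (j - i) = Rn ν (k + m) j := by
  intro j
  induction j using Nat.strong_induction_on with
  | _ j IH =>
    intro k m
    induction k with
    | zero =>
      rw [Finset.sum_eq_single 0]
      · simp [Rn_k_zero]
      · intro b _ hb0
        obtain ⟨b', rfl⟩ := Nat.exists_eq_succ_of_ne_zero hb0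
        rw [Rn_zero_succ, zero_mul]
      · intro h
        exact absurd (Finset.mem_range.2 (Nat.succ_pos j)) h
    | succ k IHk =>
      cases j with
      | zero => simp [Rn_k_zero]
      | succ j' =>
        have hIH := IH j' (Nat.lt_succ_self j') (k + ν) m
        rw [Finset.sum_range_succ']
        simp only [Nat.succ_sub_succ, Nat.sub_zero, Rn_k_zero, one_mul]
        have hstep : ∀ i, Rn ν (k + 1) (i + 1) * Rn ν m (j' - i)
            = Rn ν k (i + 1) * Rn ν m (j' - i) + Rn ν (k + ν) i * Rn ν m (j' - i) := by
          intro i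
          rw [Rn_rec ν hν k i, add_mul]
        rw [Finset.sum_congr rfl fun i _ => hstep i, Finset.sum_add_distrib, hIH]
        have hIHk : (∑ i ∈ Finset.range (j' + 1), Rn ν k (i + 1) * Rn ν m (j' - i))
            + Rn ν m (j' + 1) = Rn ν (k + m) (j' + 1) := by
          rw [Finset.sum_range_succ'] at IHk
          simp only [Nat.succ_sub_succ, Nat.sub_zero, Rn_k_zero, one_mul] at IHk
          exact IHk
        have hrec := Rn_rec ν hν (k + m) j'
        rw [show (∑ i ∈ Finset.range (j' + 1), Rn ν k (i + 1) * Rn ν m (j' - i))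
              + Rn ν (k + ν + m) j' + Rn ν m (j' + 1)
            = ((∑ i ∈ Finset.range (j' + 1), Rn ν k (i + 1) * Rn ν m (j' - i))
              + Rn ν m (j' + 1)) + Rn ν (k + ν + m) j' by ring, hIHk,
            show k + 1 + m = k + m + 1 by ring, hrec,
            show k + ν + m = k + m + ν by ring]

end GenusZeroAux2

namespace GenusZeroAux3
open GenusZeroAux

/-- L3: `2(νj+1)·Rn ν 1 j = ((ν−1)j+2)·Rn ν 2 j`. -/
lemma Rn_ratio (ν : ℕ) (hν : 1 ≤ ν) (j : ℕ) :
    2 * ((ν : ℝ) * j + 1) * Rn ν 1 j = (((ν - 1) * j + 2 : ℕ) : ℝ) * Rn ν 2 j := by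
  have hjν : j ≤ ν * j := Nat.le_mul_of_pos_left j hν
  have hnat : (ν * j + 1).choose j * (ν * j + 2) = (ν * j + 2).choose j * ((ν - 1) * j + 2) := by
    have := Nat.choose_mul_succ_eq (ν * j + 1) j
    rwa [show ν * j + 1 + 1 = ν * j + 2 by ring,
      show ν * j + 2 - j = (ν - 1) * j + 2 by
        have : (ν - 1) * j = ν * j - j := by
          rw [Nat.sub_mul, one_mul]
        omega] at this
  rw [Rn_one, Rn_two]
  have h1 : ((ν * j + 1 : ℕ) : ℝ) ≠ 0 := Nat.cast_ne_zero.2 (by omega)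
  have h2 : ((ν * j + 2 : ℕ) : ℝ) ≠ 0 := Nat.cast_ne_zero.2 (by omega)
  field_simp
  have hc := congrArg (Nat.cast : ℕ → ℝ) hnat
  push_cast [Nat.cast_sub hν] at hc ⊢
  linear_combination ((ν : ℝ) * j + 1) * hc

/-- L4: `Rn ν 1 j = νj·((ν−1)j+2)·(νj−1)!/(j!·((ν−1)j+2)!)` for `j ≥ 1`. -/
lemma Rn_one_factorial (ν : ℕ) (hν : 1 ≤ ν) (j : ℕ) (hj : 1 ≤ j) :
    Rn ν 1 j = ((ν : ℝ) * j) * (((ν - 1) * j + 2 : ℕ) : ℝ)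
      * ((ν * j - 1).factorial : ℝ) / ((j.factorial : ℝ) * (((ν - 1) * j + 2).factorial : ℝ)) := by
  have hjν : j ≤ ν * j := Nat.le_mul_of_pos_left j hν
  have hνj1 : 1 ≤ ν * j := by omega
  obtain ⟨t, ht⟩ : ∃ t, ν * j = t + 1 := ⟨ν * j - 1, by omega⟩
  have hsub : ν * j - 1 = t := by omega
  have hsub2 : ν * j + 1 - j = (ν - 1) * j + 1 := by
    have : (ν - 1) * j = ν * j - j := by rw [Nat.sub_mul, one_mul]
    omega
  have hcmf : (ν * j + 1).choose j * (j.factorial * ((ν - 1) * j + 1).factorial)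
      = (ν * j + 1).factorial := by
    have := Nat.choose_mul_factorial_mul_factorial (show j ≤ ν * j + 1 by omega)
    rwa [hsub2, mul_assoc] at this
  rw [Rn_one]
  have h1 : ((ν * j + 1 : ℕ) : ℝ) ≠ 0 := Nat.cast_ne_zero.2 (by omega)
  have hfj : ((j.factorial : ℕ) : ℝ) ≠ 0 := by exact_mod_cast j.factorial_ne_zero
  have hff : ((((ν - 1) * j + 2).factorial : ℕ) : ℝ) ≠ 0 := by
    exact_mod_cast (((ν - 1) * j + 2).factorial_ne_zero)
  rw [div_eq_div_iff h1 (by positivity)]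
  -- reduce to a natural-number identity
  have hfact2 : ((ν - 1) * j + 2).factorial
      = ((ν - 1) * j + 2) * ((ν - 1) * j + 1).factorial := Nat.factorial_succ _
  have hfact3 : (ν * j + 1).factorial = (ν * j + 1) * (ν * j) * (ν * j - 1).factorial := by
    rw [hsub, ht, Nat.factorial_succ, Nat.factorial_succ]
    ring
  have key : (ν * j + 1).choose j * (j.factorial * ((ν - 1) * j + 2).factorial)
      = (ν * j) * ((ν - 1) * j + 2) * (ν * j - 1).factorial * (ν * j + 1) := by
    calc (ν * j + 1).choose j * (j.factorial * ((ν - 1) * j + 2).factorial)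
        = ((ν - 1) * j + 2) * ((ν * j + 1).choose j * (j.factorial * ((ν - 1) * j + 1).factorial))
          := by rw [hfact2]; ring
      _ = ((ν - 1) * j + 2) * (ν * j + 1).factorial := by rw [hcmf]
      _ = (ν * j) * ((ν - 1) * j + 2) * (ν * j - 1).factorial * (ν * j + 1) := by
          rw [hfact3]; ring
  have hc := congrArg (Nat.cast : ℕ → ℝ) key
  push_cast [Nat.cast_sub hν] at hc ⊢
  linear_combination hc

end GenusZeroAux3


open PowerSeries GenusZeroAux GenusZeroAux2 GenusZeroAux3

set_option maxHeartbeats 2000000 in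
/-- If `r ∈ ℝ⟦u⟧` satisfies the string equation `r + C(2ν−1,ν)·u·r^ν = x`
(`x ≠ 0`) and `f ∈ ℝ⟦u⟧` satisfies the Toda-type relation
`ν²u²f'' + ν(ν+1)uf' + 1/2 = r²/(2x²)` (formal derivatives in `u`), then for every `j ≥ 1`
the coefficient of `u^j` in `f` equals `(−C(2ν−1,ν))^j·(νj−1)!/(j!·((ν−1)j+2)!)·x^{(ν−1)j}`. -/
theorem genus_zero_free_energy_coeffs
    (ν : ℕ) (hν : 1 ≤ ν) (x : ℝ) (hx : x ≠ 0)
    (r f : PowerSeries ℝ)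
    (hr : r + PowerSeries.C (R := ℝ) ((2 * ν - 1).choose ν : ℝ) * PowerSeries.X * r ^ ν
        = PowerSeries.C (R := ℝ) x)
    (hf : PowerSeries.C (R := ℝ) ((ν : ℝ) ^ 2) * PowerSeries.X ^ 2 *
            (PowerSeries.derivative ℝ (PowerSeries.derivative ℝ f))
        + PowerSeries.C (R := ℝ) ((ν : ℝ) * ((ν : ℝ) + 1)) * PowerSeries.X *
            (PowerSeries.derivative ℝ f)
        + PowerSeries.C (R := ℝ) (1 / 2)
        = PowerSeries.C (R := ℝ) (1 / (2 * x ^ 2)) * r ^ 2) :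
    ∀ j : ℕ, 1 ≤ j → PowerSeries.coeff (R := ℝ) j f =
      (-((2 * ν - 1).choose ν : ℝ)) ^ j * (Nat.factorial (ν * j - 1)) /
        (Nat.factorial j * Nat.factorial ((ν - 1) * j + 2)) * x ^ ((ν - 1) * j) := by
  set M : ℝ := ((2 * ν - 1).choose ν : ℝ) with hM
  set a : ℕ → ℝ := fun i => PowerSeries.coeff (R := ℝ) i r with ha
  -- constant coefficient of r
  have hc0 : PowerSeries.constantCoeff (R := ℝ) r = x := by
    have h := congrArg (PowerSeries.constantCoeff (R := ℝ)) hr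
    simpa [mul_assoc, map_mul] using h
  have ha0 : a 0 = x := by
    simpa [ha, PowerSeries.coeff_zero_eq_constantCoeff] using hc0
  -- string equation rearranged
  have key : PowerSeries.C (R := ℝ) M * PowerSeries.X * r ^ ν = PowerSeries.C (R := ℝ) x - r := by
    rw [← hr]; ring
  -- coefficient 1 of r
  have ha1 : a 1 = -(M * x ^ ν) := by
    have h := congrArg (PowerSeries.coeff (R := ℝ) 1) hr
    rw [map_add, mul_assoc, PowerSeries.coeff_C_mul, PowerSeries.coeff_succ_X_mul,
      PowerSeries.coeff_zero_eq_constantCoeff, map_pow, PowerSeries.coeff_C] at h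
    simp only [one_ne_zero, if_false] at h
    rw [hc0] at h
    have : a 1 + M * x ^ ν = 0 := by simpa [ha] using h
    linarith
  -- derivative of the string equation, multiplied by X*r
  have hpow : PowerSeries.derivative ℝ (r ^ ν)
      = PowerSeries.C (R := ℝ) (ν : ℝ) * r ^ (ν - 1) * PowerSeries.derivative ℝ r := by
    rw [Derivation.leibniz_pow, nsmul_eq_mul, smul_eq_mul]
    rw [show ((ν : ℝ⟦X⟧)) = PowerSeries.C (R := ℝ) (ν : ℝ) from (map_natCast (PowerSeries.C (R := ℝ)) ν).symm]
    ring
  have h1 : PowerSeries.derivative ℝ r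
      + (PowerSeries.C (R := ℝ) M * PowerSeries.X)
        * (PowerSeries.C (R := ℝ) (ν : ℝ) * r ^ (ν - 1) * PowerSeries.derivative ℝ r)
      + r ^ ν * PowerSeries.C (R := ℝ) M = 0 := by
    have hD := congrArg (⇑(PowerSeries.derivative ℝ)) hr
    rw [map_add, PowerSeries.derivative_C] at hD
    have hm : PowerSeries.derivative ℝ (PowerSeries.C (R := ℝ) M * PowerSeries.X * r ^ ν)
        = (PowerSeries.C (R := ℝ) M * PowerSeries.X) * PowerSeries.derivative ℝ (r ^ ν)
          + r ^ ν * PowerSeries.C (R := ℝ) M := by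
      rw [mul_assoc, Derivation.leibniz, smul_eq_mul, smul_eq_mul,
        Derivation.leibniz, smul_eq_mul, smul_eq_mul,
        PowerSeries.derivative_C, PowerSeries.derivative_X]
      ring
    rw [hm, hpow] at hD
    linear_combination hD
  have hQE : r ^ (ν - 1) * r = r ^ ν := by
    exact pow_sub_one_mul (by omega : ν ≠ 0) r
  have h2 : r * PowerSeries.derivative ℝ r
      + (PowerSeries.C (R := ℝ) M * PowerSeries.X)
        * (PowerSeries.C (R := ℝ) (ν : ℝ) * r ^ ν * PowerSeries.derivative ℝ r)
      + r ^ ν * r * PowerSeries.C (R := ℝ) M = 0 := by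
    linear_combination r * h1 - (PowerSeries.C (R := ℝ) M * PowerSeries.X * PowerSeries.C (R := ℝ) (ν : ℝ)
      * PowerSeries.derivative ℝ r) * hQE
  have E1 : PowerSeries.C (R := ℝ) (ν : ℝ)
        * (PowerSeries.C (R := ℝ) x * (PowerSeries.X * PowerSeries.derivative ℝ r))
      + PowerSeries.C (R := ℝ) x * r
      + PowerSeries.X * PowerSeries.derivative ℝ r * r
      = PowerSeries.C (R := ℝ) (ν : ℝ) * (PowerSeries.X * PowerSeries.derivative ℝ r * r)
        + r * r := by
    linear_combination PowerSeries.X * h2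
      - (PowerSeries.C (R := ℝ) (ν : ℝ) * PowerSeries.X * PowerSeries.derivative ℝ r + r) * key
  -- coefficient of X * derivative r
  have hXD : ∀ t : ℕ, PowerSeries.coeff (R := ℝ) t (PowerSeries.X * PowerSeries.derivative ℝ r)
      = (t : ℝ) * a t := by
    intro t
    cases t with
    | zero =>
      rw [PowerSeries.coeff_zero_eq_constantCoeff, map_mul, PowerSeries.constantCoeff_X]
      simp
    | succ n =>
      rw [PowerSeries.coeff_succ_X_mul, PowerSeries.coeff_derivative]
      push_cast
      simp only [ha]
      ring
  -- symmetric weighted sum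
  have hT : ∀ j : ℕ,
      2 * (∑ p ∈ Finset.HasAntidiagonal.antidiagonal j, (p.1 : ℝ) * a p.1 * a p.2)
        = (j : ℝ) * PowerSeries.coeff (R := ℝ) j (r * r) := by
    intro j
    have hswap : (∑ p ∈ Finset.HasAntidiagonal.antidiagonal j, (p.2 : ℝ) * a p.1 * a p.2)
        = ∑ p ∈ Finset.HasAntidiagonal.antidiagonal j, (p.1 : ℝ) * a p.1 * a p.2 := by
      have := Finset.Nat.sum_antidiagonal_swap
        (n := j) (f := fun p : ℕ × ℕ => (p.1 : ℝ) * a p.1 * a p.2)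
      rw [← this]
      apply Finset.sum_congr rfl
      intro p _
      simp only [Prod.fst_swap, Prod.snd_swap]
      ring
    have hmul : PowerSeries.coeff (R := ℝ) j (r * r)
        = ∑ p ∈ Finset.HasAntidiagonal.antidiagonal j, a p.1 * a p.2 := PowerSeries.coeff_mul j r r
    calc 2 * (∑ p ∈ Finset.HasAntidiagonal.antidiagonal j, (p.1 : ℝ) * a p.1 * a p.2)
        = (∑ p ∈ Finset.HasAntidiagonal.antidiagonal j, (p.1 : ℝ) * a p.1 * a p.2)
          + (∑ p ∈ Finset.HasAntidiagonal.antidiagonal j, (p.2 : ℝ) * a p.1 * a p.2) := by rw [hswap]; ring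
      _ = ∑ p ∈ Finset.HasAntidiagonal.antidiagonal j, ((p.1 : ℝ) + p.2) * (a p.1 * a p.2) := by
          rw [← Finset.sum_add_distrib]
          apply Finset.sum_congr rfl; intro p _; ring
      _ = ∑ p ∈ Finset.HasAntidiagonal.antidiagonal j, (j : ℝ) * (a p.1 * a p.2) := by
          apply Finset.sum_congr rfl
          intro p hp
          have := Finset.HasAntidiagonal.mem_antidiagonal.1 hp
          rw [show ((p.1 : ℝ) + p.2) = ((p.1 + p.2 : ℕ) : ℝ) by push_cast; ring, this]
      _ = (j : ℝ) * PowerSeries.coeff (R := ℝ) j (r * r) := by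
          rw [hmul, Finset.mul_sum]
  -- the key coefficient relation for r
  have hcoeff : ∀ j : ℕ, 1 ≤ j →
      2 * x * ((ν : ℝ) * j + 1) * a j
        = PowerSeries.coeff (R := ℝ) j (r * r) * (((ν : ℝ) - 1) * j + 2) := by
    intro j hj
    have h := congrArg (PowerSeries.coeff (R := ℝ) j) E1
    rw [map_add, map_add, map_add, PowerSeries.coeff_C_mul, PowerSeries.coeff_C_mul,
      PowerSeries.coeff_C_mul, PowerSeries.coeff_C_mul] at h
    have hXDj : PowerSeries.coeff (R := ℝ) j
        (PowerSeries.X * PowerSeries.derivative ℝ r) = (j : ℝ) * a j := hXD j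
    have hXDr : PowerSeries.coeff (R := ℝ) j (PowerSeries.X * PowerSeries.derivative ℝ r * r)
        = ∑ p ∈ Finset.HasAntidiagonal.antidiagonal j, (p.1 : ℝ) * a p.1 * a p.2 := by
      rw [PowerSeries.coeff_mul]
      apply Finset.sum_congr rfl
      intro p _
      rw [hXD p.1]
    rw [hXDj, hXDr] at h
    have hTj := hT j
    -- h : ν * (x * (j * a j)) + x * a j + T = ν * T + s
    nlinarith [h, hTj]
  -- the explicit coefficient sequence
  set A : ℕ → ℝ := fun i => (-M) ^ i * x ^ ((ν - 1) * i + 1) * Rn ν 1 i with hAdef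
  have hA0 : A 0 = x := by
    simp [hAdef, Rn_k_zero]
  have hConv : ∀ j : ℕ, ∑ i ∈ Finset.range (j + 1), A i * A (j - i)
      = (-M) ^ j * x ^ ((ν - 1) * j + 2) * Rn ν 2 j := by
    intro j
    have hptw : ∀ i ∈ Finset.range (j + 1), A i * A (j - i)
        = (-M) ^ j * x ^ ((ν - 1) * j + 2) * (Rn ν 1 i * Rn ν 1 (j - i)) := by
      intro i hi
      have hij : i ≤ j := Nat.lt_succ_iff.1 (Finset.mem_range.1 hi)
      have hexp : ((ν - 1) * i + 1) + ((ν - 1) * (j - i) + 1) = (ν - 1) * j + 2 := by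
        have : (ν - 1) * i + (ν - 1) * (j - i) = (ν - 1) * j := by
          rw [← Nat.mul_add, Nat.add_sub_cancel' hij]
        omega
      have hsgn : (-M) ^ i * (-M) ^ (j - i) = (-M) ^ j := by
        rw [← pow_add, Nat.add_sub_cancel' hij]
      have hxp : x ^ ((ν - 1) * i + 1) * x ^ ((ν - 1) * (j - i) + 1)
          = x ^ ((ν - 1) * j + 2) := by
        rw [← pow_add, hexp]
      calc A i * A (j - i)
          = ((-M) ^ i * (-M) ^ (j - i)) * (x ^ ((ν - 1) * i + 1) * x ^ ((ν - 1) * (j - i) + 1))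
            * (Rn ν 1 i * Rn ν 1 (j - i)) := by simp only [hAdef]; ring
        _ = (-M) ^ j * x ^ ((ν - 1) * j + 2) * (Rn ν 1 i * Rn ν 1 (j - i)) := by
            rw [hsgn, hxp]
    rw [Finset.sum_congr rfl hptw, ← Finset.mul_sum, Rn_conv ν hν j 1 1]
  -- a = A by strong induction
  have hA : ∀ i : ℕ, a i = A i := by
    intro i
    induction i using Nat.strong_induction_on with
    | _ i IH =>
      match i with
      | 0 => rw [ha0, hA0]
      | 1 =>
        rw [ha1]
        have h11 : Rn ν 1 1 = 1 := by
          rw [Rn_one, Nat.mul_one, Nat.choose_one_right]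
          exact div_self (Nat.cast_ne_zero.2 (by omega))
        simp only [hAdef]
        rw [h11, show (ν - 1) * 1 + 1 = ν by omega]
        ring
      | (n + 2) =>
        have h := hcoeff (n + 2) (by omega)
        have hsplit : PowerSeries.coeff (R := ℝ) (n + 2) (r * r)
            = x * a (n + 2) + (∑ i ∈ Finset.Ico 1 (n + 2), a i * a (n + 2 - i))
              + a (n + 2) * x := by
          rw [PowerSeries.coeff_mul,
            Finset.Nat.sum_antidiagonal_eq_sum_range_succ (fun p q => a p * a q),
            Finset.sum_range_succ, Finset.range_eq_Ico,
            Finset.sum_eq_sum_Ico_succ_bot (by omega : 0 < n + 2)]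
          simp only [Nat.sub_self, Nat.sub_zero, ha0]
          try ring
        have hmid : (∑ i ∈ Finset.Ico 1 (n + 2), a i * a (n + 2 - i))
            = ∑ i ∈ Finset.Ico 1 (n + 2), A i * A (n + 2 - i) := by
          apply Finset.sum_congr rfl
          intro i hi
          obtain ⟨hi1, hi2⟩ := Finset.mem_Ico.1 hi
          rw [IH i (by omega), IH (n + 2 - i) (by omega)]
        rw [hsplit, hmid] at h
        have hfullsplit : (-M) ^ (n + 2) * x ^ ((ν - 1) * (n + 2) + 2) * Rn ν 2 (n + 2)
            = x * A (n + 2) + (∑ i ∈ Finset.Ico 1 (n + 2), A i * A (n + 2 - i))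
              + A (n + 2) * x := by
          rw [← hConv (n + 2), Finset.sum_range_succ, Finset.range_eq_Ico,
            Finset.sum_eq_sum_Ico_succ_bot (by omega : 0 < n + 2)]
          simp only [Nat.sub_self, Nat.sub_zero, hA0]
          try ring
        have hzF : (((ν : ℝ) - 1) * ((n : ℝ) + 2) + 2)
              * ((-M) ^ (n + 2) * x ^ ((ν - 1) * (n + 2) + 2) * Rn ν 2 (n + 2))
            = 2 * ((ν : ℝ) * ((n : ℝ) + 2) + 1) * x * A (n + 2) := by
          have hr3 := Rn_ratio ν hν (n + 2)
          push_cast [Nat.cast_sub hν] at hr3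
          simp only [hAdef]
          rw [show (ν - 1) * (n + 2) + 2 = ((ν - 1) * (n + 2) + 1) + 1 by omega, pow_succ]
          linear_combination -(((-M) ^ (n + 2) * (x ^ ((ν - 1) * (n + 2) + 1) * x)) * hr3)
        have hAeq : 2 * x * ((ν : ℝ) * ((n : ℝ) + 2) + 1) * A (n + 2)
            = (x * A (n + 2) + (∑ i ∈ Finset.Ico 1 (n + 2), A i * A (n + 2 - i))
                + A (n + 2) * x) * (((ν : ℝ) - 1) * ((n : ℝ) + 2) + 2) := by
          linear_combination (((ν : ℝ) - 1) * ((n : ℝ) + 2) + 2) * hfullsplit - hzF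
        push_cast at h
        have hfin : (a (n + 2) - A (n + 2)) * (2 * x * ((n : ℝ) + 1)) = 0 := by
          linear_combination h - hAeq
        have hne : (2 * x * ((n : ℝ) + 1)) ≠ 0 := by
          have : (0:ℝ) < (n : ℝ) + 1 := by positivity
          intro hcontra
          apply hx
          nlinarith [this]
        have := (mul_eq_zero.1 hfin).resolve_right hne
        linarith [this]
  -- extract coefficients of f from the Toda-type relation
  intro j hj
  obtain ⟨n, rfl⟩ : ∃ n, j = n + 1 := ⟨j - 1, by omega⟩
  have hco := congrArg (PowerSeries.coeff (R := ℝ) (n + 1)) hf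
  rw [map_add, map_add] at hco
  have t3 : PowerSeries.coeff (R := ℝ) (n + 1) (PowerSeries.C (R := ℝ) (1 / 2)) = 0 := by
    rw [PowerSeries.coeff_C]; simp
  have t2 : PowerSeries.coeff (R := ℝ) (n + 1)
      (PowerSeries.C (R := ℝ) ((ν : ℝ) * ((ν : ℝ) + 1)) * PowerSeries.X * PowerSeries.derivative ℝ f)
      = (ν : ℝ) * ((ν : ℝ) + 1) * (PowerSeries.coeff (R := ℝ) (n + 1) f * ((n : ℝ) + 1)) := by
    rw [mul_assoc, PowerSeries.coeff_C_mul, PowerSeries.coeff_succ_X_mul,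
      PowerSeries.coeff_derivative]
    try push_cast
    try ring
  have t1 : PowerSeries.coeff (R := ℝ) (n + 1)
      (PowerSeries.C (R := ℝ) ((ν : ℝ) ^ 2) * PowerSeries.X ^ 2 *
        (PowerSeries.derivative ℝ (PowerSeries.derivative ℝ f)))
      = (ν : ℝ) ^ 2 * ((n : ℝ) * ((n : ℝ) + 1) * PowerSeries.coeff (R := ℝ) (n + 1) f) := by
    rw [mul_assoc, PowerSeries.coeff_C_mul]
    congr 1
    cases n with
    | zero =>
      rw [pow_two, mul_assoc, PowerSeries.coeff_succ_X_mul,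
        PowerSeries.coeff_zero_eq_constantCoeff, map_mul, PowerSeries.constantCoeff_X]
      simp
    | succ m =>
      have hidx : PowerSeries.coeff (R := ℝ) (m + 1 + 1)
          (PowerSeries.X ^ 2 * (PowerSeries.derivative ℝ (PowerSeries.derivative ℝ f)))
          = PowerSeries.coeff (R := ℝ) m (PowerSeries.derivative ℝ (PowerSeries.derivative ℝ f)) :=
        PowerSeries.coeff_X_pow_mul _ 2 m
      rw [hidx, PowerSeries.coeff_derivative, PowerSeries.coeff_derivative]
      push_cast
      ring
  have t4 : PowerSeries.coeff (R := ℝ) (n + 1) (PowerSeries.C (R := ℝ) (1 / (2 * x ^ 2)) * r ^ 2)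
      = 1 / (2 * x ^ 2) * PowerSeries.coeff (R := ℝ) (n + 1) (r * r) := by
    rw [PowerSeries.coeff_C_mul, pow_two r]
  rw [t1, t2, t3, t4] at hco
  -- assemble
  set c := PowerSeries.coeff (R := ℝ) (n + 1) f with hcdef
  set s := PowerSeries.coeff (R := ℝ) (n + 1) (r * r) with hsdef
  have heq1 : 2 * x ^ 2 * ((ν : ℝ) * ((n : ℝ) + 1) * ((ν : ℝ) * ((n : ℝ) + 1) + 1) * c)
      = s := by
    field_simp at hco
    linear_combination hco
  have heq2 := hcoeff (n + 1) (by omega)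
  rw [hA (n + 1), ← hsdef] at heq2
  push_cast at heq2
  -- heq2 : 2x(ν(n+1)+1) A(n+1) = s ((ν−1)(n+1)+2)
  have hν1 : (1 : ℝ) ≤ (ν : ℝ) := by exact_mod_cast hν
  have hzpos : (0 : ℝ) < ((ν : ℝ) - 1) * ((n : ℝ) + 1) + 2 := by nlinarith
  have hνjpos : (0 : ℝ) < (ν : ℝ) * ((n : ℝ) + 1) := by nlinarith
  have hA1 : A (n + 1) = x * (((ν : ℝ) - 1) * ((n : ℝ) + 1) + 2)
      * ((ν : ℝ) * ((n : ℝ) + 1)) * c := by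
    have h2x : (2 * x * ((ν : ℝ) * ((n : ℝ) + 1) + 1)) ≠ 0 := by
      apply mul_ne_zero (mul_ne_zero two_ne_zero hx)
      nlinarith
    apply mul_left_cancel₀ h2x
    linear_combination heq2 - ((((ν : ℝ) - 1) * ((n : ℝ) + 1) + 2)) * heq1
  -- closed form of Rn at (n+1)
  have hR := Rn_one_factorial ν hν (n + 1) (by omega)
  push_cast [Nat.cast_sub hν] at hR
  have hK : x * ((((ν : ℝ) - 1)) * ((n : ℝ) + 1) + 2) * ((ν : ℝ) * ((n : ℝ) + 1)) ≠ 0 := by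
    apply mul_ne_zero (mul_ne_zero hx hzpos.ne')
    exact hνjpos.ne'
  apply mul_right_cancel₀ hK
  have lhsA : c * (x * ((((ν : ℝ) - 1)) * ((n : ℝ) + 1) + 2) * ((ν : ℝ) * ((n : ℝ) + 1)))
      = A (n + 1) := by
    rw [hA1]; ring
  rw [lhsA]
  -- now prove A (n+1) equals the target times K
  simp only [hAdef]
  rw [hR, show (ν - 1) * (n + 1) + 1 = ((ν - 1) * (n + 1)) + 1 from rfl, pow_succ]
  have hfne1 : (((n + 1).factorial : ℕ) : ℝ) ≠ 0 := by exact_mod_cast (n + 1).factorial_ne_zero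
  have hfne2 : ((((ν - 1) * (n + 1) + 2).factorial : ℕ) : ℝ) ≠ 0 := by
    exact_mod_cast ((ν - 1) * (n + 1) + 2).factorial_ne_zero
  field_simp
  ring
end

section
/- Fix reals N > 0 and u > 0 and let w(ζ) := exp(−N(ζ²/2 + uζ⁶/6)). Let (P_n)_{n≥0} be a monic orthogonal family for w with squared norms h_n ≠ 0, recurrence coefficients R_n = h_n/h_{n−1}, and three-term recurrence ζP_n = P_{n+1} + R_nP_{n−1} (n ≥ 1), ζP_0 = P_1. Assume the integration-by-parts identity ∫_ℝ p'(ζ)w(ζ)dζ = N·∫_ℝ p(ζ)(ζ + uζ⁵)w(ζ)dζ holds for every polynomial p. Then for every n ≥ 3 the hexic string (Freud) equation holds: n/N = R_n · ( 1 + u·( R_{n+2}R_{n+1} + R_{n+1}² + 2R_nR_{n+1} + R_n² + 2R_nR_{n−1} + R_{n+1}R_{n−1} + R_{n−1}² + R_{n−1}R_{n−2} ) ). -/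
open MeasureTheory Polynomial

noncomputable def pint (w : ℝ → ℝ) (p : Polynomial ℝ) : ℝ := ∫ ζ : ℝ, p.eval ζ * w ζ

lemma pint_add (w : ℝ → ℝ) (hi : ∀ p : Polynomial ℝ, Integrable (fun ζ : ℝ => p.eval ζ * w ζ))
    (p q : Polynomial ℝ) : pint w (p + q) = pint w p + pint w q := by
  unfold pint
  simp only [eval_add, add_mul]
  exact integral_add (hi p) (hi q)

lemma pint_Cmul (w : ℝ → ℝ) (c : ℝ) (p : Polynomial ℝ) :
    pint w (Polynomial.C c * p) = c * pint w p := by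
  unfold pint
  simp only [eval_mul, eval_C, mul_assoc, MeasureTheory.integral_const_mul]

/-- For the hexic weight `w(ζ) = exp(−N(ζ²/2 + uζ⁶/6))` (`N, u > 0`), a monic
orthogonal family `(P n)` with squared norms `h n ≠ 0`, recurrence coefficients
`R n = h n / h (n−1)` and three-term recurrence, assuming the integration-by-parts identity
`∫ p' w = N·∫ p(ζ)(ζ + uζ⁵) w`, the hexic string (Freud) equation holds for every `n ≥ 3`:
`n/N = R_n·(1 + u·(R_{n+2}R_{n+1} + R_{n+1}² + 2R_nR_{n+1} + R_n² + 2R_nR_{n−1}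
 + R_{n+1}R_{n−1} + R_{n−1}² + R_{n−1}R_{n−2}))`. -/
theorem hexic_string_equation
    (N u : ℝ) (hN : 0 < N) (hu : 0 < u)
    (w : ℝ → ℝ)
    (hw : ∀ ζ : ℝ, w ζ = Real.exp (-N * (ζ ^ 2 / 2 + u * ζ ^ 6 / 6)))
    (hint : ∀ (p : Polynomial ℝ) (m : ℕ), Integrable (fun ζ : ℝ => ζ ^ m * p.eval ζ * w ζ))
    (P : ℕ → Polynomial ℝ)
    (hmonic : ∀ n, (P n).Monic)
    (hdeg : ∀ n, (P n).natDegree = n)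
    (horth : ∀ n : ℕ, ∀ q : Polynomial ℝ, q.degree < (n : WithBot ℕ) →
      ∫ ζ : ℝ, q.eval ζ * (P n).eval ζ * w ζ = 0)
    (h : ℕ → ℝ)
    (hh : ∀ n, h n = ∫ ζ : ℝ, ((P n).eval ζ) ^ 2 * w ζ)
    (hne : ∀ n, h n ≠ 0)
    (R : ℕ → ℝ)
    (hR0 : R 0 = 0)
    (hR : ∀ n, 1 ≤ n → R n = h n / h (n - 1))
    (hrec : ∀ n, 1 ≤ n → Polynomial.X * P n = P (n + 1) + Polynomial.C (R n) * P (n - 1))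
    (hrec0 : Polynomial.X * P 0 = P 1)
    (hibp : ∀ p : Polynomial ℝ,
      ∫ ζ : ℝ, (Polynomial.derivative p).eval ζ * w ζ =
        N * ∫ ζ : ℝ, p.eval ζ * (ζ + u * ζ ^ 5) * w ζ) :
    ∀ n : ℕ, 3 ≤ n →
      (n : ℝ) / N = R n *
        (1 + u * (R (n + 2) * R (n + 1) + R (n + 1) ^ 2 + 2 * R n * R (n + 1) + R n ^ 2
          + 2 * R n * R (n - 1) + R (n + 1) * R (n - 1) + R (n - 1) ^ 2
          + R (n - 1) * R (n - 2))) := by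
  intro n hn
  obtain ⟨k, rfl⟩ : ∃ k, n = k + 3 := ⟨n - 3, by omega⟩
  simp only [show k + 3 - 1 = k + 2 by omega, show k + 3 - 2 = k + 1 by omega,
    show k + 3 + 2 = k + 5 by omega, show k + 3 + 1 = k + 4 by omega]
  -- basic integrability
  have hint' : ∀ p : Polynomial ℝ, Integrable (fun ζ : ℝ => p.eval ζ * w ζ) := by
    intro p; simpa using hint p 0
  -- recurrence in convenient form
  have e : ∀ j : ℕ, Polynomial.X * P (j + 1) = P (j + 2) + Polynomial.C (R (j + 1)) * P j := by
    intro j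
    have := hrec (j + 1) (by omega)
    rw [show j + 1 + 1 = j + 2 by omega, show j + 1 - 1 = j by omega] at this
    exact this
  -- h recurrence
  have hR' : ∀ j : ℕ, h (j + 1) = R (j + 1) * h j := by
    intro j
    have := hR (j + 1) (by omega)
    rw [show j + 1 - 1 = j by omega] at this
    rw [this, div_mul_cancel₀ _ (hne j)]
  -- degrees
  have degP : ∀ i : ℕ, (P i).degree = (i : WithBot ℕ) := fun i => by
    rw [Polynomial.degree_eq_natDegree (hmonic i).ne_zero, hdeg i]
  have castlt : ∀ i j : ℕ, i < j → (i : WithBot ℕ) < (j : WithBot ℕ) := fun i j hij => by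
    exact_mod_cast hij
  -- orthogonality in pint form
  have Ihorth : ∀ (m : ℕ) (q : Polynomial ℝ), q.degree < (m : WithBot ℕ) →
      pint w (q * P m) = 0 := by
    intro m q hq
    have := horth m q hq
    simpa [pint, eval_mul] using this
  have Iorth : ∀ i j : ℕ, i ≠ j → pint w (P i * P j) = 0 := by
    intro i j hij
    rcases lt_or_gt_of_ne hij with hlt | hgt
    · exact Ihorth j (P i) (by rw [degP i]; exact castlt _ _ hlt)
    · rw [mul_comm]; exact Ihorth i (P j) (by rw [degP j]; exact castlt _ _ hgt)
  have Ih : ∀ i : ℕ, pint w (P i * P i) = h i := by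
    intro i
    rw [hh i]
    unfold pint
    simp [eval_mul, sq]
  -- expansions
  have E2 : Polynomial.X ^ 2 * P (k + 2) = P (k + 4)
      + (Polynomial.C (R (k + 3)) + Polynomial.C (R (k + 2))) * P (k + 2)
      + Polynomial.C (R (k + 2)) * Polynomial.C (R (k + 1)) * P k := by
    linear_combination (Polynomial.X : Polynomial ℝ) * e (k + 1) + e (k + 2)
      + Polynomial.C (R (k + 2)) * e k
  have E3 : Polynomial.X ^ 3 * P (k + 3) = P (k + 6)
      + (Polynomial.C (R (k + 5)) + Polynomial.C (R (k + 4)) + Polynomial.C (R (k + 3))) * P (k + 4)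
      + (Polynomial.C (R (k + 3)) * (Polynomial.C (R (k + 4)) + Polynomial.C (R (k + 3)))
         + Polynomial.C (R (k + 3)) * Polynomial.C (R (k + 2))) * P (k + 2)
      + Polynomial.C (R (k + 3)) * Polynomial.C (R (k + 2)) * Polynomial.C (R (k + 1)) * P k := by
    linear_combination (Polynomial.X ^ 2 : Polynomial ℝ) * e (k + 2)
      + Polynomial.X * e (k + 3) + e (k + 4) + Polynomial.C (R (k + 4)) * e (k + 2)
      + Polynomial.C (R (k + 3)) * (Polynomial.X * e (k + 1) + e (k + 2)
        + Polynomial.C (R (k + 2)) * e k)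
  -- the X^5 moment
  have I5 : pint w (Polynomial.X ^ 5 * (P (k + 3) * P (k + 2))) =
      (R (k + 5) + R (k + 4) + R (k + 3)) * h (k + 4)
      + ((R (k + 3) * (R (k + 4) + R (k + 3)) + R (k + 3) * R (k + 2)) * (R (k + 3) + R (k + 2))) * h (k + 2)
      + ((R (k + 3) * R (k + 2) * R (k + 1)) * (R (k + 2) * R (k + 1))) * h k := by
    have expand : Polynomial.X ^ 5 * (P (k + 3) * P (k + 2)) =
        (P (k + 6) * P (k + 4))
        + Polynomial.C (R (k + 3) + R (k + 2)) * (P (k + 6) * P (k + 2))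
        + Polynomial.C (R (k + 2) * R (k + 1)) * (P (k + 6) * P k)
        + Polynomial.C (R (k + 5) + R (k + 4) + R (k + 3)) * (P (k + 4) * P (k + 4))
        + Polynomial.C ((R (k + 5) + R (k + 4) + R (k + 3)) * (R (k + 3) + R (k + 2))) * (P (k + 4) * P (k + 2))
        + Polynomial.C ((R (k + 5) + R (k + 4) + R (k + 3)) * (R (k + 2) * R (k + 1))) * (P (k + 4) * P k)
        + Polynomial.C (R (k + 3) * (R (k + 4) + R (k + 3)) + R (k + 3) * R (k + 2)) * (P (k + 2) * P (k + 4))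
        + Polynomial.C ((R (k + 3) * (R (k + 4) + R (k + 3)) + R (k + 3) * R (k + 2)) * (R (k + 3) + R (k + 2))) * (P (k + 2) * P (k + 2))
        + Polynomial.C ((R (k + 3) * (R (k + 4) + R (k + 3)) + R (k + 3) * R (k + 2)) * (R (k + 2) * R (k + 1))) * (P (k + 2) * P k)
        + Polynomial.C (R (k + 3) * R (k + 2) * R (k + 1)) * (P k * P (k + 4))
        + Polynomial.C ((R (k + 3) * R (k + 2) * R (k + 1)) * (R (k + 3) + R (k + 2))) * (P k * P (k + 2))
        + Polynomial.C ((R (k + 3) * R (k + 2) * R (k + 1)) * (R (k + 2) * R (k + 1))) * (P k * P k) := by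
      have h5 : (Polynomial.X ^ 5 : Polynomial ℝ) * (P (k + 3) * P (k + 2))
          = (Polynomial.X ^ 3 * P (k + 3)) * (Polynomial.X ^ 2 * P (k + 2)) := by ring
      rw [h5, E3, E2]
      simp only [map_add, map_mul]
      ring
    rw [expand]
    simp only [pint_add w hint', pint_Cmul w]
    rw [Iorth (k + 6) (k + 4) (by omega), Iorth (k + 6) (k + 2) (by omega),
      Iorth (k + 6) k (by omega), Iorth (k + 4) (k + 2) (by omega),
      Iorth (k + 4) k (by omega), Iorth (k + 2) (k + 4) (by omega),
      Iorth (k + 2) k (by omega), Iorth k (k + 4) (by omega),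
      Iorth k (k + 2) (by omega), Ih (k + 4), Ih (k + 2), Ih k]
    ring
  -- the X^1 moment
  have I1 : pint w (Polynomial.X * (P (k + 3) * P (k + 2))) = R (k + 3) * h (k + 2) := by
    have hx : Polynomial.X * (P (k + 3) * P (k + 2)) = P (k + 4) * P (k + 2)
        + Polynomial.C (R (k + 3)) * (P (k + 2) * P (k + 2)) := by
      linear_combination P (k + 2) * e (k + 2)
    rw [hx, pint_add w hint', pint_Cmul w, Iorth (k + 4) (k + 2) (by omega), Ih (k + 2)]
    ring
  -- derivative terms
  have hqdeg : (Polynomial.derivative (P (k + 3)) - Polynomial.C ((k : ℝ) + 3) * P (k + 2)).degree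
      < ((k + 2 : ℕ) : WithBot ℕ) := by
    rw [Polynomial.degree_lt_iff_coeff_zero]
    intro m hm
    have hm' : k + 2 ≤ m := by exact_mod_cast hm
    simp only [Polynomial.coeff_sub, Polynomial.coeff_derivative, Polynomial.coeff_C_mul]
    rcases eq_or_lt_of_le hm' with hEq | hLt
    · have c3 : (P (k + 3)).coeff (k + 3) = 1 := by
        have := (hmonic (k + 3)).coeff_natDegree
        rwa [hdeg (k + 3)] at this
      have c2 : (P (k + 2)).coeff (k + 2) = 1 := by
        have := (hmonic (k + 2)).coeff_natDegree
        rwa [hdeg (k + 2)] at this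
      rw [← hEq]
      rw [show k + 2 + 1 = k + 3 by omega, c3, c2]
      push_cast
      ring
    · have c3 : (P (k + 3)).coeff (m + 1) = 0 := by
        apply Polynomial.coeff_eq_zero_of_natDegree_lt
        rw [hdeg]; omega
      have c2 : (P (k + 2)).coeff m = 0 := by
        apply Polynomial.coeff_eq_zero_of_natDegree_lt
        rw [hdeg]; omega
      rw [c3, c2]
      ring
  have Ld1 : pint w (Polynomial.derivative (P (k + 3)) * P (k + 2)) = ((k : ℝ) + 3) * h (k + 2) := by
    have hsplit : Polynomial.derivative (P (k + 3)) * P (k + 2)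
        = Polynomial.C ((k : ℝ) + 3) * (P (k + 2) * P (k + 2))
          + (Polynomial.derivative (P (k + 3)) - Polynomial.C ((k : ℝ) + 3) * P (k + 2)) * P (k + 2) := by
      ring
    rw [hsplit, pint_add w hint', pint_Cmul w, Ih (k + 2), Ihorth (k + 2) _ hqdeg]
    ring
  have Ld2 : pint w (P (k + 3) * Polynomial.derivative (P (k + 2))) = 0 := by
    rw [mul_comm]
    apply Ihorth
    have h1 : (Polynomial.derivative (P (k + 2))).degree < ((k + 2 : ℕ) : WithBot ℕ) := by
      rw [← degP (k + 2)]
      exact Polynomial.degree_derivative_lt (hmonic (k + 2)).ne_zero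
    exact h1.trans (castlt _ _ (by omega))
  -- assemble IBP
  have ibp := hibp (P (k + 3) * P (k + 2))
  have funeq : (fun ζ : ℝ => (P (k + 3) * P (k + 2)).eval ζ * (ζ + u * ζ ^ 5) * w ζ)
      = fun ζ : ℝ => ((Polynomial.X + Polynomial.C u * Polynomial.X ^ 5) * (P (k + 3) * P (k + 2))).eval ζ * w ζ := by
    funext ζ
    simp only [eval_mul, eval_add, eval_pow, eval_X, eval_C]
    ring
  rw [funeq] at ibp
  have ibp2 : pint w (Polynomial.derivative (P (k + 3) * P (k + 2)))
      = N * pint w ((Polynomial.X + Polynomial.C u * Polynomial.X ^ 5) * (P (k + 3) * P (k + 2))) := ibp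
  clear ibp
  rename' ibp2 => ibp
  rw [Polynomial.derivative_mul, pint_add w hint', Ld1, Ld2] at ibp
  rw [show (Polynomial.X + Polynomial.C u * Polynomial.X ^ 5) * (P (k + 3) * P (k + 2))
      = Polynomial.X * (P (k + 3) * P (k + 2))
        + Polynomial.C u * (Polynomial.X ^ 5 * (P (k + 3) * P (k + 2))) by ring,
    pint_add w hint', pint_Cmul w, I1, I5] at ibp
  -- final algebra
  have eh4 := hR' (k + 3)
  have eh3 := hR' (k + 2)
  have eh2 := hR' (k + 1)
  have eh1 := hR' k
  rw [show k + 3 + 1 = k + 4 by omega] at eh4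
  rw [show k + 2 + 1 = k + 3 by omega] at eh3
  rw [show k + 1 + 1 = k + 2 by omega] at eh2
  set S : ℝ := R (k + 5) * R (k + 4) + R (k + 4) ^ 2 + 2 * R (k + 3) * R (k + 4) + R (k + 3) ^ 2
    + 2 * R (k + 3) * R (k + 2) + R (k + 4) * R (k + 2) + R (k + 2) ^ 2 + R (k + 2) * R (k + 1) with hS
  have key : ((k : ℝ) + 3) * h (k + 2) = N * R (k + 3) * (1 + u * S) * h (k + 2) := by
    linear_combination ibp
      + N * u * ((R (k + 5) + R (k + 4) + R (k + 3)) * eh4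
        + (R (k + 5) + R (k + 4) + R (k + 3)) * R (k + 4) * eh3
        - R (k + 3) * R (k + 2) * R (k + 1) * eh2
        - R (k + 3) * R (k + 2) ^ 2 * R (k + 1) * eh1)
  have key2 : ((k : ℝ) + 3) = N * R (k + 3) * (1 + u * S) :=
    mul_right_cancel₀ (hne (k + 2)) key
  rw [div_eq_iff hN.ne']
  push_cast
  linear_combination key2
end

section
/- Let (P_n)_{n≥0} be monic real polynomials with deg P_n = n satisfying the three-term recurrence X·P_n = P_{n+1} + R_n·P_{n−1} for n ≥ 1 and X·P_0 = P_1, where the R_n are real numbers. For n ≥ 3 let A_n denote the coefficient of P_{n−3} in the expansion of the derivative P_n' in the basis (P_k)_{k≥0}. Then for every n ≥ 3: n·R_{n−1} + A_n = A_{n+1} + (n−1)·R_n. -/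
open Polynomial

private lemma coeffP_zero (P : ℕ → Polynomial ℝ) (hdeg : ∀ n, (P n).natDegree = n)
    {k m : ℕ} (h : k < m) : (P k).coeff m = 0 :=
  coeff_eq_zero_of_natDegree_lt (by rw [hdeg]; exact h)

private lemma sum_zero (P : ℕ → Polynomial ℝ)
    (hmonic : ∀ n, (P n).Monic) (hdeg : ∀ n, (P n).natDegree = n) :
    ∀ (m : ℕ) (a : ℕ → ℝ), (∑ k ∈ Finset.range m, C (a k) * P k) = 0 →
      ∀ k < m, a k = 0 := by
  intro m
  induction m with
  | zero => intro a _ k hk; omega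
  | succ m ih =>
    intro a h k hk
    rw [Finset.sum_range_succ] at h
    have ham : a m = 0 := by
      have h2 := congrArg (fun p => p.coeff m) h
      simp only [coeff_add, finset_sum_coeff, coeff_C_mul, coeff_zero] at h2
      have hm1 : (P m).coeff m = 1 := by
        have := (hmonic m).coeff_natDegree; rwa [hdeg m] at this
      rw [hm1, Finset.sum_eq_zero (fun i hi => by
        rw [coeffP_zero P hdeg (Finset.mem_range.mp hi), mul_zero])] at h2
      linarith
    rcases Nat.lt_succ_iff_lt_or_eq.mp hk with hk' | rfl
    · apply ih a _ k hk'
      rwa [ham, map_zero, zero_mul, add_zero] at h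
    · exact ham

private lemma c_top (P : ℕ → Polynomial ℝ)
    (hmonic : ∀ n, (P n).Monic) (hdeg : ∀ n, (P n).natDegree = n)
    (c : ℕ → ℕ → ℝ)
    (hc : ∀ n, Polynomial.derivative (P n) = ∑ k ∈ Finset.range n, Polynomial.C (c n k) * P k) :
    ∀ m : ℕ, c (m + 1) m = (m : ℝ) + 1 := by
  intro m
  have h := congrArg (fun p => p.coeff m) (hc (m + 1))
  simp only [coeff_derivative, finset_sum_coeff, coeff_C_mul] at h
  have hm1 : (P (m + 1)).coeff (m + 1) = 1 := by
    have := (hmonic (m + 1)).coeff_natDegree; rwa [hdeg (m + 1)] at this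
  have hm2 : (P m).coeff m = 1 := by
    have := (hmonic m).coeff_natDegree; rwa [hdeg m] at this
  rw [hm1, Finset.sum_range_succ, hm2,
    Finset.sum_eq_zero (fun i hi => by
      rw [coeffP_zero P hdeg (Finset.mem_range.mp hi), mul_zero])] at h
  linarith

/-- For monic polynomials `(P n)` of degree `n` satisfying the three-term
recurrence `X·P_n = P_{n+1} + R_n·P_{n−1}` (`n ≥ 1`) and `X·P_0 = P_1`, if `c n k` denote the
coefficients of the expansion of the derivative `P_n'` in the basis `(P_k)` (so
`P_n' = Σ_{k<n} c n k · P_k`, and `A_n = c n (n−3)`), then for every `n ≥ 3`: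
`n·R_{n−1} + A_n = A_{n+1} + (n−1)·R_n`. -/
theorem derivative_expansion_identity
    (P : ℕ → Polynomial ℝ)
    (hmonic : ∀ n, (P n).Monic)
    (hdeg : ∀ n, (P n).natDegree = n)
    (R : ℕ → ℝ)
    (hrec : ∀ n, 1 ≤ n → Polynomial.X * P n = P (n + 1) + Polynomial.C (R n) * P (n - 1))
    (hrec0 : Polynomial.X * P 0 = P 1)
    (c : ℕ → ℕ → ℝ)
    (hc : ∀ n, Polynomial.derivative (P n) = ∑ k ∈ Finset.range n, Polynomial.C (c n k) * P k) :
    ∀ n : ℕ, 3 ≤ n →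
      (n : ℝ) * R (n - 1) + c n (n - 3) = c (n + 1) (n - 2) + ((n : ℝ) - 1) * R n := by
  intro n hn
  obtain ⟨m, rfl⟩ : ∃ m, n = m + 3 := ⟨n - 3, by omega⟩
  -- uniform recurrence (valid also at 0)
  have hX : ∀ k, X * P k = P (k + 1) + C (if k = 0 then 0 else R k) * P (k - 1) := by
    intro k
    cases k with
    | zero => simpa using hrec0
    | succ k => simpa using hrec (k + 1) (by omega)
  -- piece 1
  have hS1 : ∑ k ∈ Finset.range (m + 4), C (if k = m + 3 then (1 : ℝ) else 0) * P k
      = P (m + 3) := by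
    rw [Finset.sum_eq_single (m + 3) (fun k _ hk => by simp [hk])
      (fun h => absurd (Finset.self_mem_range_succ (m + 3)) h)]
    simp
  -- piece 2
  have hS2 : ∑ k ∈ Finset.range (m + 4), C (if 1 ≤ k then c (m + 3) (k - 1) else 0) * P k
      = ∑ k ∈ Finset.range (m + 3), C (c (m + 3) k) * P (k + 1) := by
    have h := Finset.sum_range_succ'
      (fun k => C (if 1 ≤ k then c (m + 3) (k - 1) else 0) * P k) (m + 3)
    rw [show m + 3 + 1 = m + 4 from rfl] at h
    rw [h]
    simp
  -- piece 3
  have hS3 : ∑ k ∈ Finset.range (m + 4),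
        C (if k + 1 < m + 3 then c (m + 3) (k + 1) * R (k + 1) else 0) * P k
      = ∑ k ∈ Finset.range (m + 3),
        C (c (m + 3) k * (if k = 0 then 0 else R k)) * P (k - 1) := by
    rw [← Finset.sum_subset (Finset.range_subset_range.mpr (by omega : m + 2 ≤ m + 4))
      (fun k _ hk => by
        rw [if_neg (by simp only [Finset.mem_range] at hk; omega), map_zero, zero_mul])]
    have h := Finset.sum_range_succ'
      (fun k => C (c (m + 3) k * (if k = 0 then 0 else R k)) * P (k - 1)) (m + 2)
    rw [show m + 2 + 1 = m + 3 from rfl] at h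
    rw [h]
    rw [if_pos (rfl : (0 : ℕ) = 0), mul_zero, map_zero, zero_mul, add_zero]
    refine Finset.sum_congr rfl fun k hk => ?_
    simp only [Finset.mem_range] at hk
    rw [if_pos (by omega : k + 1 < m + 3), if_neg (k.succ_ne_zero), Nat.add_sub_cancel]
  -- expansion of the differentiated left-hand side
  have hA : P (m + 3) + X * derivative (P (m + 3))
      = ∑ k ∈ Finset.range (m + 4),
          C ((if k = m + 3 then (1 : ℝ) else 0) + (if 1 ≤ k then c (m + 3) (k - 1) else 0) +
            (if k + 1 < m + 3 then c (m + 3) (k + 1) * R (k + 1) else 0)) * P k := by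
    have e1 : X * derivative (P (m + 3)) = ∑ k ∈ Finset.range (m + 3),
        (C (c (m + 3) k) * P (k + 1)
          + C (c (m + 3) k * (if k = 0 then 0 else R k)) * P (k - 1)) := by
      rw [hc (m + 3), Finset.mul_sum]
      refine Finset.sum_congr rfl fun k _ => ?_
      rw [mul_left_comm, hX k, C_mul]
      ring
    rw [e1, Finset.sum_add_distrib]
    simp only [map_add, add_mul]
    rw [Finset.sum_add_distrib, Finset.sum_add_distrib, hS1, hS2, hS3]
    ring
  -- expansion of the differentiated right-hand side
  have hB : derivative (P (m + 4)) + C (R (m + 3)) * derivative (P (m + 2))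
      = ∑ k ∈ Finset.range (m + 4),
          C (c (m + 4) k + (if k < m + 2 then R (m + 3) * c (m + 2) k else 0)) * P k := by
    rw [hc (m + 4), hc (m + 2), Finset.mul_sum]
    simp only [map_add, add_mul]
    rw [Finset.sum_add_distrib]
    congr 1
    rw [← Finset.sum_subset (Finset.range_subset_range.mpr (by omega : m + 2 ≤ m + 4))
      (fun k _ hk => by
        rw [if_neg (by simp only [Finset.mem_range] at hk; omega), map_zero, zero_mul])]
    refine Finset.sum_congr rfl fun k hk => ?_
    rw [if_pos (Finset.mem_range.mp hk), C_mul]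
    ring
  -- the differentiated recurrence
  have heq : P (m + 3) + X * derivative (P (m + 3))
      = derivative (P (m + 4)) + C (R (m + 3)) * derivative (P (m + 2)) := by
    have h := congrArg derivative (hrec (m + 3) (by omega))
    simpa [derivative_mul] using h
  -- uniqueness of coefficients
  have hab := sum_zero P hmonic hdeg (m + 4)
    (fun k => ((if k = m + 3 then (1 : ℝ) else 0) + (if 1 ≤ k then c (m + 3) (k - 1) else 0) +
        (if k + 1 < m + 3 then c (m + 3) (k + 1) * R (k + 1) else 0))
      - (c (m + 4) k + (if k < m + 2 then R (m + 3) * c (m + 2) k else 0)))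
    (by
      simp only [map_sub, sub_mul, Finset.sum_sub_distrib]
      rw [← hA, ← hB, heq, sub_self])
  have key := hab (m + 1) (by omega)
  simp only [if_neg (by omega : ¬ m + 1 = m + 3), if_pos (by omega : 1 ≤ m + 1),
    if_pos (by omega : m + 1 + 1 < m + 3), if_pos (by omega : m + 1 < m + 2),
    Nat.add_sub_cancel, zero_add] at key
  have hc1 := c_top P hmonic hdeg c hc (m + 2)
  have hc2 := c_top P hmonic hdeg c hc (m + 1)
  rw [show m + 2 + 1 = m + 3 from rfl] at hc1
  rw [show m + 1 + 1 = m + 2 from rfl] at hc2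
  rw [show m + 3 - 1 = m + 2 from rfl, show m + 3 - 3 = m from rfl,
    show m + 3 - 2 = m + 1 from rfl, show m + 3 + 1 = m + 4 from rfl]
  rw [show m + 1 + 1 = m + 2 from rfl] at key
  rw [hc1, hc2] at key
  push_cast at key ⊢
  linarith [key]
end

section
/- Fix u > 0 and let I ⊆ ℝ∖{0} be an open set. Let r₀ : I → ℝ be twice differentiable and satisfy the cubic equation r₀(x) + 10u·r₀(x)³ = x for all x ∈ I. Then for every x ∈ I one has r₀(x) ≠ 0, 3x − 2r₀(x) ≠ 0, and −5u·r₀(x)·( r₀'(x)² + 2r₀(x)r₀''(x) ) / ( 1 + 30u·r₀(x)² ) = r₀(x)·(9x − 10r₀(x))·(x − r₀(x)) / ( 2·(3x − 2r₀(x))⁴ ). -/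
/-- If `r₀` is twice differentiable on an open set `I ⊆ ℝ∖{0}` (with first and
second derivatives `d1`, `d2`) and satisfies `r₀ + 10u·r₀³ = x` on `I` (`u > 0`), then on `I` one
has `r₀ ≠ 0`, `3x − 2r₀ ≠ 0`, and
`−5u·r₀·(r₀'² + 2r₀r₀'')/(1 + 30u·r₀²) = r₀·(9x − 10r₀)·(x − r₀)/(2(3x − 2r₀)⁴)`. -/
theorem hexic_r2_closed_form
    (u : ℝ) (hu : 0 < u)
    (I : Set ℝ) (hIopen : IsOpen I) (hI0 : ∀ x ∈ I, x ≠ 0)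
    (r0 d1 d2 : ℝ → ℝ)
    (hd1 : ∀ x ∈ I, HasDerivAt r0 (d1 x) x)
    (hd2 : ∀ x ∈ I, HasDerivAt d1 (d2 x) x)
    (hcubic : ∀ x ∈ I, r0 x + 10 * u * r0 x ^ 3 = x) :
    ∀ x ∈ I, r0 x ≠ 0 ∧ 3 * x - 2 * r0 x ≠ 0 ∧
      -5 * u * r0 x * (d1 x ^ 2 + 2 * r0 x * d2 x) / (1 + 30 * u * r0 x ^ 2) =
        r0 x * (9 * x - 10 * r0 x) * (x - r0 x) / (2 * (3 * x - 2 * r0 x) ^ 4) := by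
  -- first derivative identity at every point of I
  have key : ∀ y ∈ I, d1 y * (1 + 30 * u * r0 y ^ 2) = 1 := by
    intro y hy
    have hf : HasDerivAt (fun z => r0 z + 10 * u * r0 z ^ 3)
        (d1 y + 10 * u * (3 * r0 y ^ 2 * d1 y)) y := by
      exact (hd1 y hy).add (((hd1 y hy).pow 3).const_mul (10 * u))
    have heq : (fun z => r0 z + 10 * u * r0 z ^ 3) =ᶠ[nhds y] (fun z => z) := by
      filter_upwards [hIopen.mem_nhds hy] with z hz using hcubic z hz
    have hf' : HasDerivAt (fun z : ℝ => z) (d1 y + 10 * u * (3 * r0 y ^ 2 * d1 y)) y :=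
      hf.congr_of_eventuallyEq heq.symm
    have := hf'.unique (hasDerivAt_id y)
    nlinarith [this]
  intro x hx
  set r := r0 x with hr
  have hA : (0:ℝ) < 1 + 30 * u * r ^ 2 := by nlinarith [sq_nonneg r]
  have hcx := hcubic x hx
  rw [← hr] at hcx
  have hrne : r ≠ 0 := by
    intro h; apply hI0 x hx; rw [h] at hcx; linarith [hcx]
  have h3x : 3 * x - 2 * r = r * (1 + 30 * u * r ^ 2) := by nlinarith [hcx]
  have h3xne : 3 * x - 2 * r ≠ 0 := by
    rw [h3x]; exact mul_ne_zero hrne (ne_of_gt hA)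
  refine ⟨hrne, h3xne, ?_⟩
  -- second derivative identity at x
  have h2 : d2 x * (1 + 30 * u * r ^ 2) + 60 * u * r * d1 x ^ 2 = 0 := by
    have hg : HasDerivAt (fun z => d1 z * (1 + 30 * u * r0 z ^ 2))
        (d2 x * (1 + 30 * u * r0 x ^ 2) + d1 x * (30 * u * (2 * r0 x ^ 1 * d1 x))) x := by
      exact (hd2 x hx).mul ((((hd1 x hx).pow 2).const_mul (30 * u)).const_add 1)
    have heq : (fun z => d1 z * (1 + 30 * u * r0 z ^ 2)) =ᶠ[nhds x] (fun _ => (1:ℝ)) := by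
      filter_upwards [hIopen.mem_nhds hx] with z hz using key z hz
    have hg' : HasDerivAt (fun _ : ℝ => (1:ℝ))
        (d2 x * (1 + 30 * u * r0 x ^ 2) + d1 x * (30 * u * (2 * r0 x ^ 1 * d1 x))) x :=
      hg.congr_of_eventuallyEq heq.symm
    have := hg'.unique (hasDerivAt_const x 1)
    nlinarith [this]
  have h1 := key x hx
  have hd1x : d1 x = 1 / (1 + 30 * u * r ^ 2) := by
    field_simp at h1 ⊢; linarith [h1]
  have hd2x : d2 x = -(60 * u * r) / (1 + 30 * u * r ^ 2) ^ 3 := by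
    rw [hd1x] at h2
    field_simp at h2 ⊢
    nlinarith [h2]
  rw [hd1x, hd2x, h3x]
  have hAne : (1 + 30 * u * r ^ 2) ≠ 0 := ne_of_gt hA
  have hxr : x = r + 10 * u * r ^ 3 := hcx.symm
  rw [hxr]
  field_simp
  ring
end

section
/- Let x be a nonzero real number and let r be a formal power series in u with real coefficients satisfying r + 10·u·r³ = x (the constant series x). Then the constant coefficient of 2·(3x − 2r)⁴ equals 2x⁴ ≠ 0, so s := r·(9x − 10r)·(x − r) · (2·(3x − 2r)⁴)⁻¹ is a well-defined formal power series, and for every j ≥ 1 the coefficient of u^j in s equals ((−10)^j/2)·x^{2j−1}·( 10·C(3j, j−2)·Σ_{k=0}^{j−2} (3)_k(2−j)_k/((3+2j)_k·k!)·(−2)^k + C(3j, j−1)·Σ_{k=0}^{j−1} (3)_k(1−j)_k/((2+2j)_k·k!)·(−2)^k ), with the conventions C(m, i) = 0 for i < 0 and an empty sum equal to 0. -/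
open PowerSeries

/-- The Pochhammer symbol `(y)_k = y(y+1)⋯(y+k−1)` on `ℝ`. -/
noncomputable def realPoch (y : ℝ) (k : ℕ) : ℝ := (ascPochhammer ℝ k).eval y

noncomputable def FCr : ℕ → ℕ → ℝ
  | _, 0 => 1
  | 0, _+1 => 0
  | m+1, j+1 => ((3*j+m+3).choose (j+1) : ℝ) - 2*((3*j+m+3).choose j : ℝ)

lemma FCr_zero_right (m : ℕ) : FCr m 0 = 1 := by cases m <;> simp [FCr]

lemma FCr_succ (m j : ℕ) :
    FCr (m+1) (j+1) = ((3*j+m+3).choose (j+1) : ℝ) - 2*((3*j+m+3).choose j : ℝ) := by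
  simp only [FCr]

lemma FCr_zero_left (j : ℕ) (hj : 1 ≤ j) : FCr 0 j = 0 := by
  obtain ⟨i, rfl⟩ : ∃ i, j = i + 1 := ⟨j - 1, by omega⟩
  simp [FCr]

lemma FCr_eq (M i : ℕ) (hM : 1 ≤ M) (hi : 1 ≤ i) :
    FCr M i = ((3*i+M-1).choose i : ℝ) - 2*((3*i+M-1).choose (i-1) : ℝ) := by
  obtain ⟨M', rfl⟩ : ∃ M', M = M' + 1 := ⟨M - 1, by omega⟩
  obtain ⟨i', rfl⟩ : ∃ i', i = i' + 1 := ⟨i - 1, by omega⟩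
  rw [FCr_succ]
  have h1 : 3*(i'+1)+(M'+1)-1 = 3*i'+M'+3 := by omega
  have h3 : i'+1-1 = i' := by omega
  rw [h1, h3]

lemma pascal2 (N i : ℕ) :
    (((N+1).choose (i+2) : ℝ)) - 2*((N+1).choose (i+1)) =
      ((N.choose (i+2) : ℝ) - 2*(N.choose (i+1))) + ((N.choose (i+1) : ℝ) - 2*(N.choose i)) := by
  have h1 := Nat.choose_succ_succ N (i+1)
  have h2 := Nat.choose_succ_succ N i
  push_cast [h1, h2]; ring

lemma choose_double (N i : ℕ) (h : N = 3*i + 5) :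
    (N.choose (i+2) : ℝ) = 2 * (N.choose (i+1)) := by
  have h1 := Nat.choose_succ_right_eq N (i+1)
  rw [(by omega : N - (i+1) = 2*(i+2))] at h1
  have h2 : ((i:ℝ)+2) ≠ 0 := by positivity
  have h3 : (N.choose (i+2) : ℝ) * ((i:ℝ)+2) = (N.choose (i+1) : ℝ) * (2*((i:ℝ)+2)) := by
    exact_mod_cast h1
  refine mul_right_cancel₀ h2 ?_
  rw [h3]; ring

lemma FCr_rec (m j : ℕ) : FCr (m+1) (j+1) = FCr m (j+1) + FCr (m+3) j := by
  cases j with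
  | zero =>
    cases m with
    | zero =>
      rw [FCr_succ, FCr_zero_left 1 le_rfl, FCr_zero_right]
      norm_num
    | succ n =>
      rw [FCr_succ, FCr_succ, (by omega : n+1+3 = (n+3)+1), FCr_zero_right]
      push_cast [Nat.choose_one_right, Nat.choose_zero_right]; ring
  | succ i =>
    cases m with
    | zero =>
      rw [FCr_succ, FCr_zero_left (i+2) (by omega), (by rfl : (3:ℕ) = 2+1), FCr_succ]
      have e : 3*(i+1)+0+3 = (3*i+5)+1 := by omega
      have e2 : 3*i+2+3 = 3*i+5 := by omega
      rw [e, e2, pascal2 (3*i+5) i, choose_double (3*i+5) i rfl]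
      ring
    | succ n =>
      rw [FCr_succ, FCr_succ, (by omega : n+1+3 = (n+3)+1), FCr_succ]
      have e1 : 3*(i+1)+(n+1)+3 = (3*i+n+6)+1 := by omega
      have e2 : 3*(i+1)+n+3 = 3*i+n+6 := by omega
      have e3 : 3*i+(n+3)+3 = 3*i+n+6 := by omega
      rw [e1, e2, e3]
      exact pascal2 (3*i+n+6) i
noncomputable def alphaC (m : ℕ) : ℝ := 2^m * m * (6*(m:ℝ)^2 - 3*m + 1) / 8
noncomputable def betaC (m : ℕ) : ℝ := 2^m * m * (3*(m:ℝ) - 2) / 2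

lemma alpha_beta_step (m : ℕ) :
    alphaC (m+1) - betaC (m+1) = 2 * alphaC m + betaC m := by
  simp only [alphaC, betaC, pow_succ]
  push_cast; ring

lemma alpha_one : alphaC 1 = 1 := by simp [alphaC]; norm_num
lemma beta_one : betaC 1 = 1 := by simp [betaC]; norm_num

lemma sum_alpha_beta (j : ℕ) (hj : 1 ≤ j) :
    ∑ m ∈ Finset.range (j+1),
      (alphaC m * FCr (3*m) (j-m) - betaC m * ((3*j).choose (j-m) : ℝ)) = 0 := by
  set D : ℕ → ℝ := fun m =>
    if 1 ≤ m ∧ m ≤ j then (alphaC m - betaC m) * (((3*j-1).choose (j-m) : ℕ) : ℝ) else 0 with hD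
  have key : ∀ m ∈ Finset.range (j+1),
      alphaC m * FCr (3*m) (j-m) - betaC m * ((3*j).choose (j-m) : ℝ) = D m - D (m+1) := by
    intro m hm
    rw [Finset.mem_range] at hm
    have hmj : m ≤ j := by omega
    rcases Nat.eq_zero_or_pos m with h0 | h1
    · subst h0
      have hD0 : D 0 = 0 := by simp [hD]
      have hD1 : D 1 = 0 := by
        simp only [hD]
        rcases le_or_gt 1 j with h | h
        · rw [if_pos ⟨le_rfl, h⟩, alpha_one, beta_one]; ring
        · rw [if_neg (by omega)]
      rw [hD0, hD1]
      simp [alphaC, betaC]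
    · rcases eq_or_lt_of_le hmj with hmeq | hmlt
      · subst hmeq
        have hDm : D m = (alphaC m - betaC m) * 1 := by
          simp only [hD]
          rw [if_pos ⟨h1, le_rfl⟩, Nat.sub_self, Nat.choose_zero_right, Nat.cast_one]
        have hDm1 : D (m+1) = 0 := by simp only [hD]; rw [if_neg (by omega)]
        rw [hDm, hDm1, Nat.sub_self, FCr_zero_right, Nat.choose_zero_right]
        push_cast; ring
      · -- 1 ≤ m < j
        have hfcr : FCr (3*m) (j-m) = ((3*j-1).choose (j-m) : ℝ)
            - 2*((3*j-1).choose (j-(m+1)) : ℝ) := by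
          rw [FCr_eq (3*m) (j-m) (by omega) (by omega)]
          have e1 : 3*(j-m)+3*m-1 = 3*j-1 := by omega
          have e2 : j-m-1 = j-(m+1) := by omega
          rw [e1, e2]
        have hpascal : ((3*j).choose (j-m) : ℝ)
            = ((3*j-1).choose (j-(m+1)) : ℝ) + ((3*j-1).choose (j-m) : ℝ) := by
          have e1 : 3*j = (3*j-1)+1 := by omega
          have e2 : j-m = (j-(m+1))+1 := by omega
          rw [e1, e2, Nat.choose_succ_succ]
          push_cast; ring
        have hDm : D m = (alphaC m - betaC m) * ((3*j-1).choose (j-m) : ℝ) := by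
          simp only [hD]; rw [if_pos ⟨h1, hmj⟩]
        have hDm1 : D (m+1) = (alphaC (m+1) - betaC (m+1)) * ((3*j-1).choose (j-(m+1)) : ℝ) := by
          simp only [hD]; rw [if_pos ⟨by omega, by omega⟩]
        rw [hfcr, hpascal, hDm, hDm1, alpha_beta_step]
        ring
  rw [Finset.sum_congr rfl key, Finset.sum_range_sub' D (j+1)]
  have hD0 : D 0 = 0 := by simp [hD]
  have hDj : D (j+1) = 0 := by simp only [hD]; rw [if_neg (by omega)]
  rw [hD0, hDj, sub_zero]
lemma realPoch_zero (y : ℝ) : realPoch y 0 = 1 := by simp [realPoch]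

lemma realPoch_succ (y : ℝ) (k : ℕ) : realPoch y (k+1) = realPoch y k * (y + k) := by
  simpa [realPoch] using ascPochhammer_succ_eval (S := ℝ) k y

lemma realPoch_three (k : ℕ) : 2 * realPoch 3 k = ((Nat.factorial (k+2) : ℕ) : ℝ) := by
  induction k with
  | zero => simp [realPoch_zero]
  | succ k ih =>
    rw [realPoch_succ, ← mul_assoc, ih]
    have : Nat.factorial (k+1+2) = (k+3) * Nat.factorial (k+2) := by
      rw [(by omega : k+1+2 = (k+2)+1), Nat.factorial_succ]
    rw [this]; push_cast; ring

lemma realPoch_neg (n k : ℕ) (h : k ≤ n) :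
    realPoch (-(n:ℝ)) k = (-1)^k * ((Nat.factorial (k) : ℕ) : ℝ) * (n.choose k : ℝ) := by
  induction k with
  | zero => simp [realPoch_zero]
  | succ k ih =>
    have hk : k ≤ n := by omega
    rw [realPoch_succ, ih hk]
    have e1 : -(n:ℝ) + k = -(((n-k : ℕ)):ℝ) := by
      have : ((n - k : ℕ) : ℝ) = (n:ℝ) - k := by push_cast [hk]; ring
      rw [this]; ring
    have e2 : (n.choose k : ℝ) * ((n-k : ℕ) : ℝ) = (n.choose (k+1) : ℝ) * (k+1) := by
      exact_mod_cast congrArg (Nat.cast (R := ℝ)) (Nat.choose_succ_right_eq n k).symm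
    rw [e1]
    have : (-1:ℝ)^k * ((Nat.factorial (k) : ℕ) : ℝ) * (n.choose k : ℝ) * -((n-k:ℕ):ℝ)
        = (-1)^(k+1) * ((Nat.factorial (k) : ℕ) : ℝ) * ((n.choose k : ℝ) * ((n-k : ℕ):ℝ)) := by ring
    rw [this, e2, Nat.factorial_succ]
    push_cast; ring

lemma realPoch_cast (c k : ℕ) : realPoch ((c:ℝ)+1) k * ((Nat.factorial (c) : ℕ) : ℝ) = ((Nat.factorial (c+k) : ℕ) : ℝ) := by
  induction k with
  | zero => simp [realPoch_zero]
  | succ k ih =>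
    rw [realPoch_succ, mul_right_comm, ih]
    have : Nat.factorial (c+(k+1)) = (c+k+1) * Nat.factorial (c+k) := by
      rw [(by omega : c+(k+1) = (c+k)+1), Nat.factorial_succ]
    rw [this]; push_cast; ring

lemma realPoch_cast_ne (c k : ℕ) : realPoch ((c:ℝ)+1) k ≠ 0 := by
  intro h0
  have := realPoch_cast c k
  rw [h0, zero_mul] at this
  exact (Nat.cast_ne_zero.mpr (Nat.factorial_ne_zero _)).symm this

lemma key_nat (N n c k : ℕ) (hnc : n + c = N) (hk : k ≤ n) :
    N.choose n * n.choose k * Nat.factorial c * Nat.factorial k = N.choose (n-k) * Nat.factorial (c+k) := by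
  refine Nat.eq_of_mul_eq_mul_right (Nat.factorial_pos (n-k)) ?_
  have h1 : N.choose n * Nat.factorial n * Nat.factorial c = Nat.factorial N := by
    have := Nat.choose_mul_factorial_mul_factorial (show n ≤ N by omega)
    rw [(by omega : N - n = c)] at this; exact this
  have h2 : n.choose k * Nat.factorial k * Nat.factorial (n-k) = Nat.factorial n := Nat.choose_mul_factorial_mul_factorial hk
  have h3 : N.choose (n-k) * Nat.factorial (n-k) * Nat.factorial (c+k) = Nat.factorial N := by
    have := Nat.choose_mul_factorial_mul_factorial (show n - k ≤ N by omega)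
    rw [(by omega : N - (n-k) = c + k)] at this; exact this
  calc N.choose n * n.choose k * Nat.factorial c * Nat.factorial k * Nat.factorial (n-k)
      = N.choose n * (n.choose k * Nat.factorial k * Nat.factorial (n-k)) * Nat.factorial c := by ring
    _ = N.choose n * Nat.factorial n * Nat.factorial c := by rw [h2]
    _ = Nat.factorial N := h1
    _ = N.choose (n-k) * Nat.factorial (n-k) * Nat.factorial (c+k) := h3.symm
    _ = N.choose (n-k) * Nat.factorial (c+k) * Nat.factorial (n-k) := by ring

lemma poch_term (N n c k : ℕ) (hnc : n + c = N) (hk : k ≤ n) :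
    (N.choose n : ℝ) * (realPoch 3 k * realPoch (-(n:ℝ)) k /
        (realPoch ((c:ℝ)+1) k * ((Nat.factorial (k) : ℕ) : ℝ)) * (-2)^k)
      = 2^k/2 * (k+1) * (k+2) * (N.choose (n-k) : ℝ) := by
  have e1 : realPoch 3 k = ((Nat.factorial (k+2) : ℕ) : ℝ)/2 := by
    rw [← realPoch_three k]; ring
  have e2 : realPoch ((c:ℝ)+1) k = ((Nat.factorial (c+k) : ℕ) : ℝ) / ((Nat.factorial (c) : ℕ) : ℝ) := by
    rw [← realPoch_cast c k]
    field_simp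
  have hs2 : (-1:ℝ)^k * (-1)^k = 1 := by rw [← mul_pow]; norm_num
  have hng : realPoch (-(n:ℝ)) k * (-2)^k
      = 2^k * ((Nat.factorial k : ℕ) : ℝ) * (n.choose k : ℝ) := by
    rw [realPoch_neg n k hk, (by norm_num : (-2:ℝ) = -1*2), mul_pow]
    calc (-1:ℝ)^k * (Nat.factorial k : ℝ) * (n.choose k : ℝ) * ((-1)^k * 2^k)
        = ((-1:ℝ)^k * (-1)^k) * (2^k * (Nat.factorial k : ℝ) * (n.choose k : ℝ)) := by ring
      _ = 2^k * ((Nat.factorial k : ℕ) : ℝ) * (n.choose k : ℝ) := by rw [hs2]; ring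
  have hkeyR : (N.choose n : ℝ) * (n.choose k : ℝ) * ((Nat.factorial (c) : ℕ) : ℝ) * ((Nat.factorial (k) : ℕ) : ℝ)
      = (N.choose (n-k) : ℝ) * ((Nat.factorial (c+k) : ℕ) : ℝ) := by
    exact_mod_cast congrArg (Nat.cast (R := ℝ)) (key_nat N n c k hnc hk)
  have hfac2 : ((Nat.factorial (k+2) : ℕ) : ℝ) = (k+2)*(k+1)*((Nat.factorial (k) : ℕ) : ℝ) := by
    rw [(by omega : k+2 = (k+1)+1), Nat.factorial_succ, Nat.factorial_succ]
    push_cast; ring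
  have h1 : ((Nat.factorial (c) : ℕ) : ℝ) ≠ 0 := Nat.cast_ne_zero.mpr (Nat.factorial_ne_zero _)
  have h2 : ((Nat.factorial (c+k) : ℕ) : ℝ) ≠ 0 := Nat.cast_ne_zero.mpr (Nat.factorial_ne_zero _)
  have h3 : ((Nat.factorial (k) : ℕ) : ℝ) ≠ 0 := Nat.cast_ne_zero.mpr (Nat.factorial_ne_zero _)
  calc (N.choose n : ℝ) * (realPoch 3 k * realPoch (-(n:ℝ)) k /
        (realPoch ((c:ℝ)+1) k * ((Nat.factorial (k) : ℕ) : ℝ)) * (-2)^k)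
      = (N.choose n : ℝ) * (realPoch 3 k * (realPoch (-(n:ℝ)) k * (-2)^k) /
        (realPoch ((c:ℝ)+1) k * ((Nat.factorial (k) : ℕ) : ℝ))) := by ring
    _ = 2^k/2 * (k+1) * (k+2) * (N.choose (n-k) : ℝ) := by
        rw [hng, e1, e2, hfac2]
        field_simp
        ring_nf
        linear_combination hkeyR
noncomputable def qqf (x : ℝ) (k : ℕ) : ℝ :=
  ((k:ℝ)+1)*((k:ℝ)+2)*((k:ℝ)+3) * (-2)^k / (12 * x^(k+4))

noncomputable def CWf (x : ℝ) (j m : ℕ) : ℝ :=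
  if m ≤ j then (-1)^(j-m) * 10^j * x^(2*j+m) * FCr (3*m) (j-m) else 0

lemma neg_one_pow_sub_mul (j m : ℕ) (h : m ≤ j) : (-1:ℝ)^(j-m) * (-1)^m = (-1)^j := by
  rw [← pow_add]; congr 1; omega

lemma neg_ten_pow (j m : ℕ) (h : m ≤ j) :
    (-10:ℝ)^j = (-1:ℝ)^(j-m) * (-1)^m * 10^j := by
  rw [(by norm_num : (-10:ℝ) = -1*10), mul_pow, neg_one_pow_sub_mul j m h]

lemma align (x : ℝ) (hx : x ≠ 0) (j m : ℕ) (hj : 1 ≤ j) (hm : 1 ≤ m) (hmj : m ≤ j) :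
    (if 1 ≤ m then qqf x (m-1) * (-(x^2)) * CWf x j m else 0)
      + (if 2 ≤ m then qqf x (m-2) * (11*x) * CWf x j m else 0)
      + (if 3 ≤ m then qqf x (m-3) * (-10) * CWf x j m else 0)
    = (-10:ℝ)^j/2 * x^(2*j-1) * (alphaC m * FCr (3*m) (j-m)) := by
  have hcw : CWf x j m = (-1:ℝ)^(j-m) * 10^j * x^(2*j+m) * FCr (3*m) (j-m) := by
    rw [CWf, if_pos hmj]
  have hxp : x^(2*j+m) = x^(2*j-1) * x^(m+1) := by
    rw [← pow_add]; congr 1; omega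
  have h10 := neg_ten_pow j m hmj
  match m, hm with
  | 1, _ =>
    rw [if_pos le_rfl, if_neg (by omega), if_neg (by omega), hcw, hxp, h10, alpha_one]
    show qqf x 0 * _ * _ + 0 + 0 = _
    rw [qqf]
    norm_num
    field_simp
    ring
  | 2, _ =>
    rw [if_pos (by omega), if_pos le_rfl, if_neg (by omega), hcw, hxp, h10]
    show qqf x 1 * _ * _ + qqf x 0 * _ * _ + 0 = _
    rw [qqf, qqf, alphaC]
    norm_num
    field_simp
    ring
  | (n+3), _ =>
    rw [if_pos (by omega : (1:ℕ) ≤ n+3), if_pos (by omega : (2:ℕ) ≤ n+3), if_pos (by omega : (3:ℕ) ≤ n+3), hcw, hxp, h10]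
    have hm2 : (-2:ℝ)^n = (-1)^n * 2^n := by
      rw [(by norm_num : (-2:ℝ) = -1*2), mul_pow]
    have hq0 : qqf x ((n+3)-3) = ((n:ℝ)+1)*((n:ℝ)+2)*((n:ℝ)+3)*((-1)^n*2^n)/(12*x^(n+4)) := by
      rw [(by omega : (n+3)-3 = n), qqf, hm2]
    have hq1 : qqf x ((n+3)-2)
        = ((n:ℝ)+2)*((n:ℝ)+3)*((n:ℝ)+4)*((-1)^n*2^n*(-2))/(12*(x^(n+4)*x)) := by
      rw [(by omega : (n+3)-2 = n+1), qqf, pow_succ (-2:ℝ) n, hm2,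
        (by omega : n+1+4 = (n+4)+1), pow_succ]
      push_cast; ring
    have hq2 : qqf x ((n+3)-1)
        = ((n:ℝ)+3)*((n:ℝ)+4)*((n:ℝ)+5)*((-1)^n*2^n*4)/(12*(x^(n+4)*x^2)) := by
      rw [(by omega : (n+3)-1 = n+2), qqf, pow_succ (-2:ℝ) (n+1), pow_succ (-2:ℝ) n, hm2,
        (by omega : n+2+4 = (n+4)+1+1), pow_succ, pow_succ]
      push_cast; ring
    rw [hq0, hq1, hq2, alphaC]
    have hxn : x^(n+4) ≠ 0 := pow_ne_zero _ hx
    push_cast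
    field_simp
    ring
lemma CWf_zero (x : ℝ) (j m : ℕ) (h : j < m) : CWf x j m = 0 := by
  rw [CWf, if_neg (by omega)]

lemma alphaC_zero : alphaC 0 = 0 := by simp [alphaC]

lemma final_real (x : ℝ) (hx : x ≠ 0) (j : ℕ) (hj : 1 ≤ j) :
    ∑ k ∈ Finset.range (j+1),
      qqf x k * (-(x^2) * CWf x j (k+1) + 11*x * CWf x j (k+2) - 10 * CWf x j (k+3))
    = (-10:ℝ)^j/2 * x^(2*j-1)
        * ∑ m ∈ Finset.range (j+1), betaC m * ((3*j).choose (j-m) : ℝ) := by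
  set A1 : ℕ → ℝ := fun m => if 1 ≤ m then qqf x (m-1) * (-(x^2)) * CWf x j m else 0 with hA1
  set A2 : ℕ → ℝ := fun m => if 2 ≤ m then qqf x (m-2) * (11*x) * CWf x j m else 0 with hA2
  set A3 : ℕ → ℝ := fun m => if 3 ≤ m then qqf x (m-3) * (-10) * CWf x j m else 0 with hA3
  have hsplit : ∀ k, qqf x k * (-(x^2) * CWf x j (k+1) + 11*x * CWf x j (k+2) - 10 * CWf x j (k+3))
      = qqf x k * (-(x^2)) * CWf x j (k+1) + qqf x k * (11*x) * CWf x j (k+2)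
        + qqf x k * (-10) * CWf x j (k+3) := by intro k; ring
  rw [Finset.sum_congr rfl (fun k _ => hsplit k), Finset.sum_add_distrib, Finset.sum_add_distrib]
  have c1 : ∑ k ∈ Finset.range (j+1), qqf x k * (-(x^2)) * CWf x j (k+1)
      = ∑ m ∈ Finset.range (j+1), A1 m := by
    have e1 : ∑ m ∈ Finset.range (j+2), A1 m
        = ∑ k ∈ Finset.range (j+1), qqf x k * (-(x^2)) * CWf x j (k+1) := by
      rw [Finset.sum_range_succ']
      have : A1 0 = 0 := by simp [hA1]
      rw [this, add_zero]
      refine Finset.sum_congr rfl fun i _ => ?_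
      simp only [hA1, if_pos (by omega : 1 ≤ i+1), Nat.add_sub_cancel]
    have e2 : ∑ m ∈ Finset.range (j+2), A1 m = ∑ m ∈ Finset.range (j+1), A1 m := by
      rw [Finset.sum_range_succ]
      have : A1 (j+1) = 0 := by
        simp only [hA1]; rw [CWf_zero x j (j+1) (by omega)]; simp
      rw [this, add_zero]
    rw [← e1, e2]
  have c2 : ∑ k ∈ Finset.range (j+1), qqf x k * (11*x) * CWf x j (k+2)
      = ∑ m ∈ Finset.range (j+1), A2 m := by
    have e1 : ∑ m ∈ Finset.range (j+3), A2 m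
        = ∑ k ∈ Finset.range (j+1), qqf x k * (11*x) * CWf x j (k+2) := by
      rw [(by omega : j+3 = (j+2)+1), Finset.sum_range_succ', (by omega : j+2 = (j+1)+1),
        Finset.sum_range_succ']
      have h0 : A2 0 = 0 := by simp [hA2]
      have h1 : A2 (0+1) = 0 := by simp [hA2]
      rw [h0, h1, add_zero, add_zero]
      refine Finset.sum_congr rfl fun i _ => ?_
      simp only [hA2, if_pos (by omega : 2 ≤ i+1+1)]
      rw [(by omega : i+1+1-2 = i), (by omega : i+1+1 = i+2)]
    have e2 : ∑ m ∈ Finset.range (j+3), A2 m = ∑ m ∈ Finset.range (j+1), A2 m := by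
      rw [(by omega : j+3 = (j+1)+1+1), Finset.sum_range_succ, Finset.sum_range_succ]
      have h1 : A2 (j+1) = 0 := by
        simp only [hA2]; rw [CWf_zero x j (j+1) (by omega)]; simp
      have h2 : A2 (j+1+1) = 0 := by
        simp only [hA2]; rw [CWf_zero x j (j+1+1) (by omega)]; simp
      rw [h1, h2, add_zero, add_zero]
    rw [← e1, e2]
  have c3 : ∑ k ∈ Finset.range (j+1), qqf x k * (-10) * CWf x j (k+3)
      = ∑ m ∈ Finset.range (j+1), A3 m := by
    have e1 : ∑ m ∈ Finset.range (j+4), A3 m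
        = ∑ k ∈ Finset.range (j+1), qqf x k * (-10) * CWf x j (k+3) := by
      rw [(by omega : j+4 = (j+3)+1), Finset.sum_range_succ', (by omega : j+3 = (j+2)+1),
        Finset.sum_range_succ', (by omega : j+2 = (j+1)+1), Finset.sum_range_succ']
      have h0 : A3 0 = 0 := by simp [hA3]
      have h1 : A3 (0+1) = 0 := by simp [hA3]
      have h2 : A3 (0+1+1) = 0 := by simp [hA3]
      rw [h0, h1, h2, add_zero, add_zero, add_zero]
      refine Finset.sum_congr rfl fun i _ => ?_
      simp only [hA3, if_pos (by omega : 3 ≤ i+1+1+1)]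
      rw [(by omega : i+1+1+1-3 = i), (by omega : i+1+1+1 = i+3)]
    have e2 : ∑ m ∈ Finset.range (j+4), A3 m = ∑ m ∈ Finset.range (j+1), A3 m := by
      rw [(by omega : j+4 = (j+1)+1+1+1), Finset.sum_range_succ, Finset.sum_range_succ,
        Finset.sum_range_succ]
      have h1 : A3 (j+1) = 0 := by
        simp only [hA3]; rw [CWf_zero x j (j+1) (by omega)]; simp
      have h2 : A3 (j+1+1) = 0 := by
        simp only [hA3]; rw [CWf_zero x j (j+1+1) (by omega)]; simp
      have h3 : A3 (j+1+1+1) = 0 := by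
        simp only [hA3]; rw [CWf_zero x j (j+1+1+1) (by omega)]; simp
      rw [h1, h2, h3, add_zero, add_zero, add_zero]
    rw [← e1, e2]
  rw [c1, c2, c3, ← Finset.sum_add_distrib, ← Finset.sum_add_distrib]
  have hmain : ∀ m ∈ Finset.range (j+1), A1 m + A2 m + A3 m
      = (-10:ℝ)^j/2 * x^(2*j-1) * (alphaC m * FCr (3*m) (j-m)) := by
    intro m hm
    rw [Finset.mem_range] at hm
    rcases Nat.eq_zero_or_pos m with h0 | h1
    · subst h0
      simp [hA1, hA2, hA3, alphaC_zero]
    · exact align x hx j m hj h1 (by omega)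
  rw [Finset.sum_congr rfl hmain, ← Finset.mul_sum]
  congr 1
  have := sum_alpha_beta j hj
  rw [Finset.sum_sub_distrib, sub_eq_zero] at this
  exact this
lemma betaC_zero : betaC 0 = 0 := by simp [betaC]

lemma bracket_eq (j : ℕ) (hj : 1 ≤ j) :
    10 * (if 2 ≤ j then ((3*j).choose (j-2) : ℝ) else 0) *
        (∑ k ∈ Finset.range (j-1), realPoch 3 k * realPoch (2-(j:ℝ)) k /
          (realPoch (3+2*(j:ℝ)) k * (Nat.factorial k : ℝ)) * (-2:ℝ)^k)
      + ((3*j).choose (j-1) : ℝ) *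
        (∑ k ∈ Finset.range j, realPoch 3 k * realPoch (1-(j:ℝ)) k /
          (realPoch (2+2*(j:ℝ)) k * (Nat.factorial k : ℝ)) * (-2:ℝ)^k)
    = ∑ m ∈ Finset.range (j+1), betaC m * ((3*j).choose (j-m) : ℝ) := by
  -- part A : the second (main) sum
  have hcast1 : (1 : ℝ) - (j:ℝ) = -(((j-1 : ℕ)):ℝ) := by
    rw [Nat.cast_sub hj]; push_cast; ring
  have hcast2 : (2 : ℝ) + 2*(j:ℝ) = (((2*j+1 : ℕ)):ℝ)+1 := by push_cast; ring
  have partA : ((3*j).choose (j-1) : ℝ) *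
      (∑ k ∈ Finset.range j, realPoch 3 k * realPoch (1-(j:ℝ)) k /
        (realPoch (2+2*(j:ℝ)) k * (Nat.factorial k : ℝ)) * (-2:ℝ)^k)
      = ∑ k ∈ Finset.range j, 2^k/2 * ((k:ℝ)+1) * ((k:ℝ)+2) * ((3*j).choose (j-1-k) : ℝ) := by
    rw [Finset.mul_sum]
    refine Finset.sum_congr rfl fun k hk => ?_
    rw [Finset.mem_range] at hk
    rw [hcast1, hcast2]
    exact poch_term (3*j) (j-1) (2*j+1) k (by omega) (by omega)
  -- part B : the first sum (j ≥ 2 needed for nonemptiness)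
  have partB : 10 * (if 2 ≤ j then ((3*j).choose (j-2) : ℝ) else 0) *
      (∑ k ∈ Finset.range (j-1), realPoch 3 k * realPoch (2-(j:ℝ)) k /
        (realPoch (3+2*(j:ℝ)) k * (Nat.factorial k : ℝ)) * (-2:ℝ)^k)
      = ∑ k ∈ Finset.range (j-1), 10 * (2^k/2 * ((k:ℝ)+1) * ((k:ℝ)+2) * ((3*j).choose (j-2-k) : ℝ)) := by
    rcases lt_or_ge j 2 with h2 | h2
    · have : j - 1 = 0 := by omega
      rw [this]
      simp
    · rw [if_pos h2, mul_assoc, Finset.mul_sum, Finset.mul_sum]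
      refine Finset.sum_congr rfl fun k hk => ?_
      rw [Finset.mem_range] at hk
      have hcast3 : (2 : ℝ) - (j:ℝ) = -(((j-2 : ℕ)):ℝ) := by
        rw [Nat.cast_sub h2]; push_cast; ring
      have hcast4 : (3 : ℝ) + 2*(j:ℝ) = (((2*j+2 : ℕ)):ℝ)+1 := by push_cast; ring
      rw [hcast3, hcast4]
      exact congrArg (fun t => 10 * t) (poch_term (3*j) (j-2) (2*j+2) k (by omega) (by omega))
  rw [partA, partB]
  -- now both purely binomial; compare with beta sum
  have step1 : ∑ m ∈ Finset.range (j+1), betaC m * ((3*j).choose (j-m) : ℝ)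
      = ∑ k ∈ Finset.range j, betaC (k+1) * ((3*j).choose (j-(k+1)) : ℝ) := by
    rw [Finset.sum_range_succ', betaC_zero, zero_mul, add_zero]
  have step2 : ∀ k : ℕ, betaC (k+1) * ((3*j).choose (j-(k+1)) : ℝ)
      = 2^k/2 * ((k:ℝ)+1) * ((k:ℝ)+2) * ((3*j).choose (j-1-k) : ℝ)
        + (5 * 2^k * (k:ℝ) * ((k:ℝ)+1) / 2) * ((3*j).choose (j-1-k) : ℝ) := by
    intro k
    rw [(by omega : j-(k+1) = j-1-k), betaC, pow_succ]
    push_cast; ring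
  have step3 : ∑ k ∈ Finset.range j, (5 * 2^k * (k:ℝ) * ((k:ℝ)+1) / 2) * ((3*j).choose (j-1-k) : ℝ)
      = ∑ k ∈ Finset.range (j-1), 10 * (2^k/2 * ((k:ℝ)+1) * ((k:ℝ)+2) * ((3*j).choose (j-2-k) : ℝ)) := by
    rw [(by omega : j = (j-1)+1), Finset.sum_range_succ']
    rw [(by omega : (j-1)+1 = j)]
    have h0 : (5 * 2^(0:ℕ) * ((0:ℕ):ℝ) * (((0:ℕ):ℝ)+1) / 2) * ((3*j).choose (j-1-0) : ℝ) = 0 := by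
      norm_num
    rw [h0, add_zero]
    refine Finset.sum_congr rfl fun k hk => ?_
    rw [Finset.mem_range] at hk
    rw [(by omega : j-1-(k+1) = j-2-k), pow_succ]
    push_cast; ring
  rw [step1, Finset.sum_congr rfl (fun k _ => step2 k), Finset.sum_add_distrib, step3]
  ring
noncomputable def e0f (x : ℝ) (j : ℕ) : ℝ :=
  -(((j:ℝ)+2)*((j:ℝ)+3)*((j:ℝ)+4)/6) * (-2/x)^(j+1)
noncomputable def e1f (x : ℝ) (j : ℕ) : ℝ :=
  (((j:ℝ)-1)*(j:ℝ)*((j:ℝ)+1)/6 - 4*((j:ℝ)*((j:ℝ)+1)*((j:ℝ)+2))/6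
    + ((j:ℝ)+1)*((j:ℝ)+2)*((j:ℝ)+3)) * (-2/x)^(j+2)
noncomputable def e2f (x : ℝ) (j : ℕ) : ℝ :=
  ((j:ℝ)*((j:ℝ)+1)*((j:ℝ)+2)/6 - 4*(((j:ℝ)+1)*((j:ℝ)+2)*((j:ℝ)+3)/6)) * (-2/x)^(j+3)
noncomputable def e3f (x : ℝ) (j : ℕ) : ℝ :=
  (((j:ℝ)+1)*((j:ℝ)+2)*((j:ℝ)+3)/6) * (-2/x)^(j+4)

lemma expand4 (x a : ℝ) (w : PowerSeries ℝ) :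
    2*(PowerSeries.C x + 2*w)^4 * PowerSeries.C a
    = PowerSeries.C (2*a*x^4) + PowerSeries.C (16*a*x^3)*w
      + PowerSeries.C (48*a*x^2)*w^2 + PowerSeries.C (64*a*x)*w^3
      + PowerSeries.C (32*a)*w^4 := by
  simp only [map_mul, map_pow, map_ofNat]
  ring

lemma geom (x : ℝ) (hx : x ≠ 0) (w : PowerSeries ℝ) : ∀ j : ℕ,
    2 * (PowerSeries.C x + 2*w)^4
      * (∑ k ∈ Finset.range (j+1), PowerSeries.C (qqf x k) * w^k)
    = 1 + PowerSeries.C (e0f x j) * w^(j+1) + PowerSeries.C (e1f x j) * w^(j+2)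
        + PowerSeries.C (e2f x j) * w^(j+3) + PowerSeries.C (e3f x j) * w^(j+4) := by
  intro j
  induction j with
  | zero =>
    rw [Finset.sum_range_one, pow_zero, mul_one, expand4]
    have r0 : 2*(qqf x 0)*x^4 = 1 := by rw [qqf]; field_simp; ring
    have r1 : 16*(qqf x 0)*x^3 = e0f x 0 := by
      rw [qqf, e0f]; norm_num; field_simp; ring
    have r2 : 48*(qqf x 0)*x^2 = e1f x 0 := by
      rw [qqf, e1f]; norm_num; field_simp; ring
    have r3 : 64*(qqf x 0)*x = e2f x 0 := by
      rw [qqf, e2f]; norm_num; field_simp; ring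
    have r4 : 32*(qqf x 0) = e3f x 0 := by
      rw [qqf, e3f]; norm_num; field_simp; ring
    rw [r0, r1, r2, r3, r4, map_one]
    ring
  | succ j ih =>
    rw [Finset.sum_range_succ, mul_add, ih, ← mul_assoc, expand4]
    have hq : qqf x (j+1) = ((j:ℝ)+2)*((j:ℝ)+3)*((j:ℝ)+4)*(-2)^(j+1)/(12*x^(j+1+4)) := by
      rw [qqf]; push_cast; ring
    have i0 : 2*(qqf x (j+1))*x^4 = -(e0f x j) := by
      rw [hq, e0f]; simp only [div_pow]; push_cast
      field_simp
      ring
    have i1 : e0f x (j+1) = e1f x j + 16*(qqf x (j+1))*x^3 := by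
      rw [hq, e0f, e1f]; simp only [div_pow]; push_cast
      field_simp
      ring
    have i2 : e1f x (j+1) = e2f x j + 48*(qqf x (j+1))*x^2 := by
      rw [hq, e1f, e2f]; simp only [div_pow]; push_cast
      field_simp
      ring
    have i3 : e2f x (j+1) = e3f x j + 64*(qqf x (j+1))*x := by
      rw [hq, e2f, e3f]; simp only [div_pow]; push_cast
      field_simp
      ring
    have i4 : e3f x (j+1) = 32*(qqf x (j+1)) := by
      rw [hq, e3f]; simp only [div_pow]; push_cast
      field_simp
      ring
    rw [i1, i2, i3, i4, map_add, map_add, map_add,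
      (by linarith [i0] : e0f x j = -(2*qqf x (j+1)*x^4)), map_neg]
    ring

/-- If `r ∈ ℝ⟦u⟧` satisfies `r + 10·u·r³ = x` with `x ≠ 0`, then the constant
coefficient of `2(3x − 2r)⁴` equals `2x⁴ ≠ 0`, so `s = r(9x − 10r)(x − r)·(2(3x − 2r)⁴)⁻¹` is a
well-defined power series, and for `j ≥ 1` its `u^j`-coefficient equals
`((−10)^j/2)·x^{2j−1}·(10·C(3j,j−2)·₂F₁(3,2−j;3+2j;−2) + C(3j,j−1)·₂F₁(3,1−j;2+2j;−2))`
(with terminating hypergeometric sums, `C(m,i) = 0` for `i < 0`, empty sums `= 0`). -/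
theorem hexic_r2_coeffs
    (x : ℝ) (hx : x ≠ 0) (r : PowerSeries ℝ)
    (hr : r + 10 * PowerSeries.X * r ^ 3 = PowerSeries.C x) :
    PowerSeries.coeff 0 (2 * (PowerSeries.C (3 * x) - 2 * r) ^ 4) = 2 * x ^ 4 ∧
    (2 * x ^ 4 : ℝ) ≠ 0 ∧
    ∀ j : ℕ, 1 ≤ j →
      PowerSeries.coeff j
        (r * (PowerSeries.C (9 * x) - 10 * r) * (PowerSeries.C x - r) *
          (2 * (PowerSeries.C (3 * x) - 2 * r) ^ 4)⁻¹) =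
      (-10 : ℝ) ^ j / 2 * x ^ (2 * j - 1) *
        (10 * (if 2 ≤ j then ((3 * j).choose (j - 2) : ℝ) else 0) *
            (∑ k ∈ Finset.range (j - 1),
              realPoch 3 k * realPoch (2 - (j : ℝ)) k /
                (realPoch (3 + 2 * (j : ℝ)) k * (Nat.factorial k : ℝ)) * (-2 : ℝ) ^ k)
          + ((3 * j).choose (j - 1) : ℝ) *
            (∑ k ∈ Finset.range j,
              realPoch 3 k * realPoch (1 - (j : ℝ)) k /
                (realPoch (2 + 2 * (j : ℝ)) k * (Nat.factorial k : ℝ)) * (-2 : ℝ) ^ k)) := by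
  have hc0 : PowerSeries.constantCoeff r = x := by
    have h := congrArg (PowerSeries.constantCoeff) hr
    simpa using h
  have hden_const : PowerSeries.coeff 0 (2 * (PowerSeries.C (3 * x) - 2 * r) ^ 4)
      = 2 * x ^ 4 := by
    rw [PowerSeries.coeff_zero_eq_constantCoeff_apply]
    simp [hc0, map_ofNat]
    ring
  refine ⟨hden_const, by positivity, ?_⟩
  intro j hj
  have hre : r = PowerSeries.C x - 10 * PowerSeries.X * r^3 := by linear_combination hr
  set w : PowerSeries ℝ := PowerSeries.C x - r with hw_def
  have hw : w = 10 * PowerSeries.X * r^3 := by rw [hw_def]; linear_combination -hr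
  -- coefficients of powers of r
  have hcoeffr : ∀ jj m : ℕ, PowerSeries.coeff jj (r^m)
      = (-10:ℝ)^jj * x^(m+2*jj) * FCr m jj := by
    intro jj
    induction jj with
    | zero =>
      intro m
      rw [PowerSeries.coeff_zero_eq_constantCoeff_apply, map_pow, hc0, FCr_zero_right]
      simp
    | succ jj ih =>
      intro m
      induction m with
      | zero =>
        rw [pow_zero, FCr_zero_left (jj+1) (by omega)]
        simp [PowerSeries.coeff_one]
      | succ m ihm =>
        have h10 : (10:PowerSeries ℝ) = PowerSeries.C 10 := (map_ofNat _ 10).symm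
        have hsplit : r^(m+1) = PowerSeries.C x * r^m
            - PowerSeries.C 10 * (PowerSeries.X * r^(m+3)) := by
          calc r^(m+1) = r * r^m := by ring
            _ = (PowerSeries.C x - 10 * PowerSeries.X * r^3) * r^m := by rw [← hre]
            _ = PowerSeries.C x * r^m - PowerSeries.C 10 * (PowerSeries.X * r^(m+3)) := by
                rw [h10]; ring
        rw [hsplit, map_sub, PowerSeries.coeff_C_mul, PowerSeries.coeff_C_mul,
          PowerSeries.coeff_succ_X_mul, ihm, ih (m+3), FCr_rec m jj]
        ring
  -- coefficients of powers of w
  have hcoeffw : ∀ m : ℕ, PowerSeries.coeff j (w^m) = CWf x j m := by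
    intro m
    have h10 : (10:PowerSeries ℝ) = PowerSeries.C 10 := (map_ofNat _ 10).symm
    have hwm : w^m = PowerSeries.X^m * (PowerSeries.C ((10:ℝ)^m) * r^(3*m)) := by
      rw [hw, h10, map_pow]
      ring
    rw [hwm, PowerSeries.coeff_X_pow_mul', CWf]
    by_cases hmj : m ≤ j
    · rw [if_pos hmj, if_pos hmj, PowerSeries.coeff_C_mul, hcoeffr (j-m) (3*m)]
      have hxe : x^(3*m+2*(j-m)) = x^(2*j+m) := by congr 1; omega
      have hsgn : (10:ℝ)^m * (-10)^(j-m) = (-1)^(j-m) * 10^j := by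
        rw [(by norm_num : (-10:ℝ) = -1*10), mul_pow]
        have h2 : (10:ℝ)^m * 10^(j-m) = 10^j := by rw [← pow_add]; congr 1; omega
        calc (10:ℝ)^m * ((-1)^(j-m) * 10^(j-m))
            = (-1)^(j-m) * ((10:ℝ)^m * 10^(j-m)) := by ring
          _ = (-1)^(j-m) * 10^j := by rw [h2]
      rw [hxe]
      linear_combination (x^(2*j+m) * FCr (3*m) (j-m)) * hsgn
    · rw [if_neg hmj, if_neg hmj]
  -- numerator and denominator
  have hC9 : PowerSeries.C (9*x) = 9 * PowerSeries.C x := by rw [map_mul, map_ofNat]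
  have hC3 : PowerSeries.C (3*x) = 3 * PowerSeries.C x := by rw [map_mul, map_ofNat]
  have h10' : (10:PowerSeries ℝ) = PowerSeries.C 10 := (map_ofNat _ 10).symm
  have hnum_w : r * (PowerSeries.C (9 * x) - 10 * r) * (PowerSeries.C x - r)
      = PowerSeries.C (-(x^2)) * w + PowerSeries.C (11*x) * w^2
        - PowerSeries.C 10 * w^3 := by
    rw [hC9, hw_def, map_neg, map_pow, (by rw [map_mul, map_ofNat] : PowerSeries.C (11*x) = 11 * PowerSeries.C x), ← h10']
    ring
  have hdc : PowerSeries.constantCoeff (2 * (PowerSeries.C (3 * x) - 2 * r) ^ 4) ≠ 0 := by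
    rw [← PowerSeries.coeff_zero_eq_constantCoeff_apply, hden_const]
    positivity
  have hden2 : 2 * (PowerSeries.C (3 * x) - 2 * r) ^ 4
      = 2 * (PowerSeries.C x + 2*w)^4 := by
    rw [hC3, hw_def]; ring
  set num := r * (PowerSeries.C (9 * x) - 10 * r) * (PowerSeries.C x - r) with hnum_def
  set den := 2 * (PowerSeries.C (3 * x) - 2 * r) ^ 4 with hden_def
  set QQ := ∑ k ∈ Finset.range (j+1), PowerSeries.C (qqf x k) * w^k with hQQ
  have hgeom : den * QQ = 1 + PowerSeries.C (e0f x j) * w^(j+1)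
      + PowerSeries.C (e1f x j) * w^(j+2) + PowerSeries.C (e2f x j) * w^(j+3)
      + PowerSeries.C (e3f x j) * w^(j+4) := by
    rw [hden2, hQQ]
    exact geom x hx w j
  have hsden : num * den⁻¹ * den = num := by
    rw [mul_assoc, PowerSeries.inv_mul_cancel den hdc, mul_one]
  have hwX : ∀ (n : ℕ) (f : PowerSeries ℝ), j < n → PowerSeries.coeff j (f * w^n) = 0 := by
    intro n f hn
    have he : f * w^n = PowerSeries.X^n * ((10:PowerSeries ℝ)^n * (r^3)^n * f) := by
      rw [hw]; ring
    rw [he, PowerSeries.coeff_X_pow_mul', if_neg (by omega)]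
  have key : PowerSeries.coeff j (num * den⁻¹) = PowerSeries.coeff j (num * QQ) := by
    have h1 : num * den⁻¹ * (den * QQ) = num * QQ := by
      rw [(by ring : num * den⁻¹ * (den * QQ) = (num * den⁻¹ * den) * QQ), hsden]
    rw [← h1, hgeom]
    have hz : ∀ (a : ℝ) (n : ℕ), j < n →
        PowerSeries.coeff j (num * den⁻¹ * (PowerSeries.C a * w^n)) = 0 := by
      intro a n hn
      rw [(by ring : num * den⁻¹ * (PowerSeries.C a * w^n)
        = (num * den⁻¹ * PowerSeries.C a) * w^n)]
      exact hwX n _ hn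
    rw [(by ring : num * den⁻¹ * (1 + PowerSeries.C (e0f x j) * w^(j+1)
        + PowerSeries.C (e1f x j) * w^(j+2) + PowerSeries.C (e2f x j) * w^(j+3)
        + PowerSeries.C (e3f x j) * w^(j+4))
      = num * den⁻¹ + num * den⁻¹ * (PowerSeries.C (e0f x j) * w^(j+1))
        + num * den⁻¹ * (PowerSeries.C (e1f x j) * w^(j+2))
        + num * den⁻¹ * (PowerSeries.C (e2f x j) * w^(j+3))
        + num * den⁻¹ * (PowerSeries.C (e3f x j) * w^(j+4))),
      map_add, map_add, map_add, map_add,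
      hz _ (j+1) (by omega), hz _ (j+2) (by omega), hz _ (j+3) (by omega),
      hz _ (j+4) (by omega)]
    ring
  have hnq : PowerSeries.coeff j (num * QQ)
      = ∑ k ∈ Finset.range (j+1), qqf x k * (-(x^2) * CWf x j (k+1)
          + 11*x * CWf x j (k+2) - 10 * CWf x j (k+3)) := by
    rw [hQQ, Finset.mul_sum, map_sum]
    refine Finset.sum_congr rfl fun k hk => ?_
    rw [(by rw [hnum_w]; ring : num * (PowerSeries.C (qqf x k) * w^k)
      = PowerSeries.C (qqf x k) * (PowerSeries.C (-(x^2)) * w^(k+1)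
        + PowerSeries.C (11*x) * w^(k+2) - PowerSeries.C 10 * w^(k+3))),
      PowerSeries.coeff_C_mul, map_sub, map_add, PowerSeries.coeff_C_mul,
      PowerSeries.coeff_C_mul, PowerSeries.coeff_C_mul, hcoeffw, hcoeffw, hcoeffw]
  rw [key, hnq, final_real x hx j hj, ← bracket_eq j hj]
end

section
/- Let ν ≥ 1 be an integer. In the multivariate polynomial ring ℚ[X_ℓ : ℓ ∈ ℤ], define T : ℕ → ℤ → ℚ[X_ℓ : ℓ ∈ ℤ] recursively by T(0, k) = 1 if k = 0 and T(0, k) = 0 otherwise, and T(m+1, k) = T(m, k−1) + X_{k+1}·T(m, k+1). Then: (a) evaluating T(2ν−1, −1) at X_ℓ = 1 for all ℓ gives the binomial coefficient C(2ν−1, ν); (b) T(2ν−1, −1) is a homogeneous polynomial of degree ν; (c) every variable X_ℓ occurring in T(2ν−1, −1) satisfies −ν+1 ≤ ℓ ≤ ν−1. -/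
/-- `T m k` encodes the coefficient of `P_{n+k}` in the expansion of `ζ^m·P_n` for polynomials
satisfying the three-term recurrence `ζP_j = P_{j+1} + R_jP_{j−1}`, with the variable `X_ℓ`
standing for `R_{n+ℓ}`. -/
noncomputable def freudT : ℕ → ℤ → MvPolynomial ℤ ℚ
  | 0, k => if k = 0 then 1 else 0
  | m + 1, k => freudT m (k - 1) + MvPolynomial.X (k + 1) * freudT m (k + 1)

lemma freudT_eq_zero_of_gt : ∀ (m : ℕ) (k : ℤ), (m : ℤ) < k → freudT m k = 0 := by
  intro m
  induction m with
  | zero =>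
    intro k hk
    rw [freudT, if_neg (by omega)]
  | succ m ih =>
    intro k hk
    rw [freudT, ih (k - 1) (by push_cast at hk ⊢; omega),
      ih (k + 1) (by push_cast at hk ⊢; omega), mul_zero, add_zero]

lemma freudT_eq_zero_of_lt : ∀ (m : ℕ) (k : ℤ), k < -(m : ℤ) → freudT m k = 0 := by
  intro m
  induction m with
  | zero =>
    intro k hk
    rw [freudT, if_neg (by omega)]
  | succ m ih =>
    intro k hk
    rw [freudT, ih (k - 1) (by push_cast at hk ⊢; omega),
      ih (k + 1) (by push_cast at hk ⊢; omega), mul_zero, add_zero]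

lemma freudT_isHomogeneous : ∀ (m n : ℕ) (k : ℤ), k = (m : ℤ) - 2 * n →
    (freudT m k).IsHomogeneous n := by
  intro m
  induction m with
  | zero =>
    intro n k hk
    rcases Nat.eq_zero_or_pos n with h | h
    · subst h
      simp only [Nat.cast_zero, mul_zero, sub_zero] at hk
      subst hk
      rw [freudT, if_pos rfl]
      exact MvPolynomial.isHomogeneous_one _ _
    · rw [freudT, if_neg (by omega)]
      exact MvPolynomial.isHomogeneous_zero _ _ _
  | succ m ih =>
    intro n k hk
    rw [freudT]
    apply MvPolynomial.IsHomogeneous.add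
    · exact ih n (k - 1) (by push_cast at hk ⊢; omega)
    · rcases Nat.eq_zero_or_pos n with h | h
      · subst h
        rw [freudT_eq_zero_of_gt m (k + 1) (by push_cast at hk ⊢; omega), mul_zero]
        exact MvPolynomial.isHomogeneous_zero _ _ _
      · have hmul := (MvPolynomial.isHomogeneous_X ℚ (k + 1)).mul
          (ih (n - 1) (k + 1) (by push_cast at hk ⊢; omega))
        have hn : 1 + (n - 1) = n := by omega
        rwa [hn] at hmul

lemma freudT_eval_one : ∀ (m n : ℕ) (k : ℤ), k = (m : ℤ) - 2 * n →
    MvPolynomial.eval (fun _ : ℤ => (1 : ℚ)) (freudT m k) = (m.choose n : ℚ) := by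
  intro m
  induction m with
  | zero =>
    intro n k hk
    rcases Nat.eq_zero_or_pos n with h | h
    · subst h
      simp only [Nat.cast_zero, mul_zero, sub_zero] at hk
      subst hk
      rw [freudT, if_pos rfl]
      simp
    · rw [freudT, if_neg (by omega), Nat.choose_eq_zero_of_lt (by omega)]
      simp
  | succ m ih =>
    intro n k hk
    rw [freudT, map_add, map_mul, MvPolynomial.eval_X, one_mul]
    rcases Nat.eq_zero_or_pos n with h | h
    · subst h
      rw [freudT_eq_zero_of_gt m (k + 1) (by push_cast at hk ⊢; omega),
        ih 0 (k - 1) (by push_cast at hk ⊢; omega), map_zero, add_zero]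
      simp
    · obtain ⟨n', rfl⟩ : ∃ n', n = n' + 1 := ⟨n - 1, by omega⟩
      rw [ih (n' + 1) (k - 1) (by push_cast at hk ⊢; omega),
        ih n' (k + 1) (by push_cast at hk ⊢; omega), Nat.choose_succ_succ']
      push_cast
      ring

lemma freudT_vars : ∀ (m : ℕ) (k ℓ : ℤ), ℓ ∈ (freudT m k).vars →
    k - m + 2 ≤ 2 * ℓ ∧ 2 * ℓ ≤ m + k := by
  intro m
  induction m with
  | zero =>
    intro k ℓ hℓ
    exfalso
    by_cases h : k = 0 <;> simp [freudT, h] at hℓ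
  | succ m ih =>
    intro k ℓ hℓ
    rw [freudT] at hℓ
    have h1 := MvPolynomial.vars_add_subset _ _ hℓ
    rw [Finset.mem_union] at h1
    rcases h1 with h | h
    · have := ih (k - 1) ℓ h
      push_cast at this ⊢
      omega
    · by_cases hz : freudT m (k + 1) = 0
      · rw [hz, mul_zero] at h
        simp at h
      · have hk1 : k + 1 ≤ (m : ℤ) := by
          by_contra hc
          exact hz (freudT_eq_zero_of_gt _ _ (by omega))
        have hk2 : -(m : ℤ) ≤ k + 1 := by
          by_contra hc
          exact hz (freudT_eq_zero_of_lt _ _ (by omega))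
        have h2 := MvPolynomial.vars_mul _ _ h
        rw [Finset.mem_union, MvPolynomial.vars_X, Finset.mem_singleton] at h2
        rcases h2 with h2 | h2
        · subst h2
          push_cast
          omega
        · have := ih (k + 1) ℓ h2
          push_cast at this ⊢
          omega

/-- The Freud function `F_ν = freudT (2ν−1) (−1)`:
(a) evaluates to `C(2ν−1, ν)` at `X_ℓ = 1`;
(b) is homogeneous of degree `ν`;
(c) involves only variables `X_ℓ` with `−ν+1 ≤ ℓ ≤ ν−1`. -/
theorem freud_function_properties (ν : ℕ) (hν : 1 ≤ ν) :
    MvPolynomial.eval (fun _ : ℤ => (1 : ℚ)) (freudT (2 * ν - 1) (-1))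
        = ((2 * ν - 1).choose ν : ℚ) ∧
    (freudT (2 * ν - 1) (-1)).IsHomogeneous ν ∧
    ∀ ℓ ∈ (freudT (2 * ν - 1) (-1)).vars, -(ν : ℤ) + 1 ≤ ℓ ∧ ℓ ≤ (ν : ℤ) - 1 := by
  have hcast : ((2 * ν - 1 : ℕ) : ℤ) = 2 * (ν : ℤ) - 1 := by omega
  refine ⟨freudT_eval_one _ ν _ (by omega), freudT_isHomogeneous _ ν _ (by omega), ?_⟩
  intro ℓ hℓ
  have := freudT_vars _ _ _ hℓ
  omega
end
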